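/- arXiv:2312.12597 — 5 statements merged into one kernel-verified Lean document; each statement's English description precedes it below -/
import Mathlib

section
/- For every probability measures Z0 and Z1 on a measurable space Ω and every measurable classifier g : Ω → ℝ taking values in {0,1}, there exists a measurable adversary h : Ω → ℝ taking values in {0,1} (namely h = 1 − g if ∫ g dZ0 ≥ ∫ g dZ1, and h = g otherwise) such that L_DP(h) = Δ_DP(g). Consequently, the supremum of L_DP(h) over all measurable {0,1}-valued adversaries h is at least Δ_DP(g): the demographic parity distance of any classifier learnable from the representation is bounded above by the optimal adversarial objective value. -/
open MeasureTheory

private lemma int01 {Ω : Type*} [MeasurableSpace Ω] (μ : Measure Ω) [IsProbabilityMeasure μ]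
    (h : Ω → ℝ) (hm : Measurable h) (h01 : ∀ x, h x = 0 ∨ h x = 1) : Integrable h μ := by
  apply Integrable.mono' (integrable_const (1:ℝ)) hm.aestronglyMeasurable
  filter_upwards with x
  rcases h01 x with h|h <;> simp [h]

private lemma int01_le {Ω : Type*} [MeasurableSpace Ω] (μ : Measure Ω) [IsProbabilityMeasure μ]
    (h : Ω → ℝ) (hm : Measurable h) (h01 : ∀ x, h x = 0 ∨ h x = 1) :
    0 ≤ ∫ x, h x ∂μ ∧ ∫ x, h x ∂μ ≤ 1 := by
  constructor
  · apply integral_nonneg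
    intro x; rcases h01 x with h|h <;> simp [h]
  · calc ∫ x, h x ∂μ ≤ ∫ _x, (1:ℝ) ∂μ := by
          apply integral_mono (int01 μ h hm h01) (integrable_const 1)
          intro x; rcases h01 x with h|h <;> simp [h]
       _ = 1 := by simp

/-- LAFTR demographic-parity bound: for any binary classifier `g`, the adversary
`h = 1 - g` (if `∫ g dZ0 ≥ ∫ g dZ1`, else `h = g`) achieves `L_DP(h) = Δ_DP(g)`,
hence `Δ_DP(g)` is bounded above by the optimal adversarial objective value. -/
theorem laftr_demographic_parity_bound
    {Ω : Type*} [MeasurableSpace Ω]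
    (Z0 Z1 : Measure Ω) [IsProbabilityMeasure Z0] [IsProbabilityMeasure Z1]
    (g : Ω → ℝ) (hg : Measurable g) (hg01 : ∀ x, g x = 0 ∨ g x = 1) :
    (∃ h : Ω → ℝ, Measurable h ∧ (∀ x, h x = 0 ∨ h x = 1) ∧
      ((∫ x, g x ∂Z1 ≤ ∫ x, g x ∂Z0) → h = fun x => 1 - g x) ∧
      (¬ (∫ x, g x ∂Z1 ≤ ∫ x, g x ∂Z0) → h = g) ∧
      (∫ x, (1 - h x) ∂Z0) + (∫ x, h x ∂Z1) - 1
        = |(∫ x, g x ∂Z0) - ∫ x, g x ∂Z1|) ∧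
    |(∫ x, g x ∂Z0) - ∫ x, g x ∂Z1| ≤
      sSup {L : ℝ | ∃ h : Ω → ℝ, Measurable h ∧ (∀ x, h x = 0 ∨ h x = 1) ∧
        L = (∫ x, (1 - h x) ∂Z0) + (∫ x, h x ∂Z1) - 1} := by
  have hi0 := int01 Z0 g hg hg01
  have hi1 := int01 Z1 g hg hg01
  have main : ∃ h : Ω → ℝ, Measurable h ∧ (∀ x, h x = 0 ∨ h x = 1) ∧
      ((∫ x, g x ∂Z1 ≤ ∫ x, g x ∂Z0) → h = fun x => 1 - g x) ∧
      (¬ (∫ x, g x ∂Z1 ≤ ∫ x, g x ∂Z0) → h = g) ∧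
      (∫ x, (1 - h x) ∂Z0) + (∫ x, h x ∂Z1) - 1
        = |(∫ x, g x ∂Z0) - ∫ x, g x ∂Z1| := by
    by_cases hle : ∫ x, g x ∂Z1 ≤ ∫ x, g x ∂Z0
    · refine ⟨fun x => 1 - g x, measurable_const.sub hg, ?_, fun _ => rfl, fun hc => absurd hle hc, ?_⟩
      · intro x; rcases hg01 x with h|h <;> simp [h]
      · have e0 : (∫ x, (1 - (1 - g x)) ∂Z0) = ∫ x, g x ∂Z0 := by
          congr 1; funext x; ring
        have e1 : (∫ x, (1 - g x) ∂Z1) = 1 - ∫ x, g x ∂Z1 := by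
          rw [integral_sub (integrable_const 1) hi1]; simp
        rw [e0, e1, abs_of_nonneg (sub_nonneg.2 hle)]; ring
    · refine ⟨g, hg, hg01, fun hc => absurd hc hle, fun _ => rfl, ?_⟩
      have e0 : (∫ x, (1 - g x) ∂Z0) = 1 - ∫ x, g x ∂Z0 := by
        rw [integral_sub (integrable_const 1) hi0]; simp
      rw [e0, abs_of_neg (by linarith [not_le.mp hle])]; ring
  refine ⟨main, ?_⟩
  obtain ⟨h, hm, h01, _, _, heq⟩ := main
  apply le_csSup
  · refine ⟨1, ?_⟩
    rintro L ⟨h', hm', h01', rfl⟩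
    have e0 : (∫ x, (1 - h' x) ∂Z0) = 1 - ∫ x, h' x ∂Z0 := by
      rw [integral_sub (integrable_const 1) (int01 Z0 h' hm' h01')]; simp
    have b0 := int01_le Z0 h' hm' h01'
    have b1 := int01_le Z1 h' hm' h01'
    rw [e0]; linarith [b0.1, b1.2]
  · exact ⟨h, hm, h01, heq.symm⟩
end

section
/- For every probability measures Z00, Z10, Z01, Z11 on a measurable space Ω and every measurable classifier g : Ω → ℝ taking values in {0,1}, there exists a measurable adversary h : Ω × {0,1} → ℝ taking values in {0,1} (constructed piecewise from g and 1 − g according to the second argument) such that L_EO(h) = Δ_EO(g). Consequently, the supremum of L_EO(h) over all measurable {0,1}-valued adversaries h is at least Δ_EO(g): the equalized odds distance of any classifier learnable from the representation is bounded above by the optimal adversarial objective value. -/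
open MeasureTheory

lemma int01_facts {Ω : Type*} [MeasurableSpace Ω] (μ : Measure Ω) [IsProbabilityMeasure μ]
    {f : Ω → ℝ} (hf : Measurable f) (h01 : ∀ x, f x = 0 ∨ f x = 1) :
    Integrable f μ ∧ 0 ≤ ∫ x, f x ∂μ ∧ (∫ x, f x ∂μ) ≤ 1 ∧
    (∫ x, (1 - f x) ∂μ) = 1 - ∫ x, f x ∂μ := by
  have hint : Integrable f μ := by
    apply Integrable.mono' (integrable_const 1) hf.aestronglyMeasurable
    filter_upwards with x
    rcases h01 x with h | h <;> simp [h]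
  refine ⟨hint, integral_nonneg (fun x => by rcases h01 x with h|h <;> simp [h]), ?_, ?_⟩
  · calc ∫ x, f x ∂μ ≤ ∫ _x, (1:ℝ) ∂μ :=
        integral_mono hint (integrable_const 1)
          (fun x => by rcases h01 x with h|h <;> simp [h])
      _ = 1 := by simp
  · rw [integral_sub (integrable_const 1) hint]; simp

/-- LAFTR equalized-odds bound: for any binary classifier `g`, there is an adversary
`h : Ω × {0,1} → {0,1}` built piecewise from `g` and `1 - g` according to the second
argument with `L_EO(h) = Δ_EO(g)`; hence `Δ_EO(g)` is bounded above by the optimal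
adversarial objective value. -/
theorem laftr_equalized_odds_bound
    {Ω : Type*} [MeasurableSpace Ω]
    (Z00 Z10 Z01 Z11 : Measure Ω)
    [IsProbabilityMeasure Z00] [IsProbabilityMeasure Z10]
    [IsProbabilityMeasure Z01] [IsProbabilityMeasure Z11]
    (g : Ω → ℝ) (hg : Measurable g) (hg01 : ∀ x, g x = 0 ∨ g x = 1) :
    (∃ h : Ω → Bool → ℝ,
      (∀ b, Measurable fun x => h x b) ∧ (∀ x b, h x b = 0 ∨ h x b = 1) ∧
      (∀ b, (fun x => h x b) = g ∨ (fun x => h x b) = fun x => 1 - g x) ∧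
      (∫ x, (1 - h x false) ∂Z00) + (∫ x, h x false ∂Z10) +
        (∫ x, (1 - h x true) ∂Z01) + (∫ x, h x true ∂Z11) - 2
        = |(∫ x, g x ∂Z00) - ∫ x, g x ∂Z10| +
          |(∫ x, (1 - g x) ∂Z01) - ∫ x, (1 - g x) ∂Z11|) ∧
    |(∫ x, g x ∂Z00) - ∫ x, g x ∂Z10| +
      |(∫ x, (1 - g x) ∂Z01) - ∫ x, (1 - g x) ∂Z11| ≤
      sSup {L : ℝ | ∃ h : Ω → Bool → ℝ,
        (∀ b, Measurable fun x => h x b) ∧ (∀ x b, h x b = 0 ∨ h x b = 1) ∧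
        L = (∫ x, (1 - h x false) ∂Z00) + (∫ x, h x false ∂Z10) +
            (∫ x, (1 - h x true) ∂Z01) + (∫ x, h x true ∂Z11) - 2} := by
  -- abbreviations
  set d0 : ℝ := (∫ x, g x ∂Z00) - ∫ x, g x ∂Z10 with hd0
  set d1 : ℝ := (∫ x, (1 - g x) ∂Z01) - ∫ x, (1 - g x) ∂Z11 with hd1
  have hg' : Measurable fun x => 1 - g x := (measurable_const.sub hg)
  have hg01' : ∀ x, (1 - g x) = 0 ∨ (1 - g x) = 1 := by
    intro x; rcases hg01 x with h|h <;> simp [h]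
  -- the adversary
  set h : Ω → Bool → ℝ := fun x b =>
    if b then (if 0 ≤ d1 then g x else 1 - g x)
    else (if d0 ≤ 0 then g x else 1 - g x) with hh
  have hmeas : ∀ b, Measurable fun x => h x b := by
    intro b; cases b <;> simp only [hh, Bool.false_eq_true, if_false, if_true] <;>
      split <;> first | exact hg | exact hg'
  have hvals : ∀ x b, h x b = 0 ∨ h x b = 1 := by
    intro x b; cases b <;> simp only [hh, Bool.false_eq_true, if_false, if_true] <;>
      split <;> first | exact hg01 x | exact hg01' x
  have hpiece : ∀ b, (fun x => h x b) = g ∨ (fun x => h x b) = fun x => 1 - g x := by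
    intro b; cases b
    · by_cases h0 : d0 ≤ 0
      · left; funext x; simp [hh, h0]
      · right; funext x; simp [hh, h0]
    · by_cases h1 : 0 ≤ d1
      · left; funext x; simp [hh, h1]
      · right; funext x; simp [hh, h1]
  obtain ⟨i00, n00, b00, s00⟩ := int01_facts Z00 hg hg01
  obtain ⟨i10, n10, b10, s10⟩ := int01_facts Z10 hg hg01
  obtain ⟨i01, n01, b01, s01⟩ := int01_facts Z01 hg hg01
  obtain ⟨i11, n11, b11, s11⟩ := int01_facts Z11 hg hg01
  obtain ⟨i00', n00', b00', s00'⟩ := int01_facts Z00 hg' hg01'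
  obtain ⟨i01', n01', b01', s01'⟩ := int01_facts Z01 hg' hg01'
  have key : (∫ x, (1 - h x false) ∂Z00) + (∫ x, h x false ∂Z10) +
        (∫ x, (1 - h x true) ∂Z01) + (∫ x, h x true ∂Z11) - 2
        = |d0| + |d1| := by
    by_cases h0 : d0 ≤ 0 <;> by_cases h1 : 0 ≤ d1 <;>
      simp only [hh, if_true, if_false, Bool.false_eq_true, h0, h1, if_pos, if_neg,
        not_false_iff]
    · rw [abs_of_nonpos h0, abs_of_nonneg h1]; linarith [s00, s11, hd0, hd1]
    · rw [abs_of_nonpos h0, abs_of_neg (lt_of_not_ge h1), s01']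
      linarith [s00, hd0, hd1]
    · rw [abs_of_pos (lt_of_not_ge h0), abs_of_nonneg h1, s00']
      linarith [s10, s11, hd0, hd1]
    · rw [abs_of_pos (lt_of_not_ge h0), abs_of_neg (lt_of_not_ge h1), s00', s01']
      linarith [s10, hd0, hd1]
  refine ⟨⟨h, hmeas, hvals, hpiece, key⟩, ?_⟩
  have hmem : |d0| + |d1| ∈ {L : ℝ | ∃ h : Ω → Bool → ℝ,
        (∀ b, Measurable fun x => h x b) ∧ (∀ x b, h x b = 0 ∨ h x b = 1) ∧
        L = (∫ x, (1 - h x false) ∂Z00) + (∫ x, h x false ∂Z10) +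
            (∫ x, (1 - h x true) ∂Z01) + (∫ x, h x true ∂Z11) - 2} :=
    ⟨h, hmeas, hvals, key.symm⟩
  refine le_csSup ⟨2, ?_⟩ hmem
  rintro L ⟨h', hm', hv', rfl⟩
  obtain ⟨_, nf0, bf0, sf0⟩ := int01_facts Z00 (hm' false) (fun x => hv' x false)
  obtain ⟨_, nf1, bf1, _⟩ := int01_facts Z10 (hm' false) (fun x => hv' x false)
  obtain ⟨_, nt0, bt0, st0⟩ := int01_facts Z01 (hm' true) (fun x => hv' x true)
  obtain ⟨_, nt1, bt1, _⟩ := int01_facts Z11 (hm' true) (fun x => hv' x true)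
  rw [sf0, st0]
  linarith
end

section
/- Let N be a positive integer, let y : Fin N → {0,1} be binary labels, and let q : Fin N → [0,1] be soft environment assignments with Σ_i q_i > 0 and Σ_i (1 − q_i) > 0. Define the per-bin invariance violation Δ(q) = | (Σ_i q_i y_i)/(Σ_i q_i) − (Σ_i (1 − q_i) y_i)/(Σ_i (1 − q_i)) |. Then Δ(q) ≤ 1 for all such q; moreover, if both labels occur (there exist i, i' with y_i = 1 and y_{i'} = 0), then the hard assignment q_i = y_i satisfies the positivity conditions and attains Δ(q) = 1. Hence assigning all examples with y = 1 to one environment and all examples with y = 0 to the other achieves the maximum possible value of the per-bin violation of the environment invariance constraint. -/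
open Finset

lemma ratio_mem_unit {N : ℕ} (y w : Fin N → ℝ) (hy : ∀ i, 0 ≤ y i ∧ y i ≤ 1)
    (hw : ∀ i, 0 ≤ w i) (hpos : 0 < ∑ i, w i) :
    0 ≤ (∑ i, w i * y i) / (∑ i, w i) ∧ (∑ i, w i * y i) / (∑ i, w i) ≤ 1 := by
  constructor
  · apply div_nonneg _ hpos.le
    exact Finset.sum_nonneg fun i _ => mul_nonneg (hw i) (hy i).1
  · rw [div_le_one hpos]
    apply Finset.sum_le_sum fun i _ => ?_
    calc w i * y i ≤ w i * 1 := by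
          exact mul_le_mul_of_nonneg_left (hy i).2 (hw i)
      _ = w i := mul_one _

/-- Binned environment invariance: within a bin, the violation
`Δ(q) = |(Σ qᵢyᵢ)/(Σ qᵢ) − (Σ (1−qᵢ)yᵢ)/(Σ (1−qᵢ))|` of the environment invariance
constraint is at most `1` for every soft assignment `q`, and if both labels occur then
the hard assignment `q = y` (all `y = 1` examples to environment 1, all `y = 0`
examples to environment 2) satisfies the positivity conditions and attains `Δ = 1`. -/
theorem binned_invariance_violation_maximized_by_label_split
    (N : ℕ) (hN : 0 < N) (y : Fin N → ℝ) (hy : ∀ i, y i = 0 ∨ y i = 1) :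
    (∀ q : Fin N → ℝ, (∀ i, 0 ≤ q i ∧ q i ≤ 1) →
      0 < ∑ i, q i → 0 < ∑ i, (1 - q i) →
      |(∑ i, q i * y i) / (∑ i, q i) -
        (∑ i, (1 - q i) * y i) / (∑ i, (1 - q i))| ≤ 1) ∧
    ((∃ i, y i = 1) → (∃ i, y i = 0) →
      (∀ i, 0 ≤ y i ∧ y i ≤ 1) ∧
      0 < ∑ i, y i ∧ 0 < ∑ i, (1 - y i) ∧
      |(∑ i, y i * y i) / (∑ i, y i) -
        (∑ i, (1 - y i) * y i) / (∑ i, (1 - y i))| = 1) := by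
  have hy01 : ∀ i, 0 ≤ y i ∧ y i ≤ 1 := fun i => by rcases hy i with h | h <;> rw [h] <;> norm_num
  constructor
  · intro q hq h1 h2
    have A := ratio_mem_unit y q hy01 (fun i => (hq i).1) h1
    have B := ratio_mem_unit y (fun i => 1 - q i) hy01
      (fun i => sub_nonneg.mpr (hq i).2) h2
    rw [abs_le]
    constructor <;> [linarith [A.1, B.2]; linarith [A.2, B.1]]
  · rintro ⟨i1, hi1⟩ ⟨i0, hi0⟩
    have hs1 : 0 < ∑ i, y i := by
      apply Finset.sum_pos' (fun i _ => (hy01 i).1) ⟨i1, Finset.mem_univ _, by rw [hi1]; norm_num⟩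
    have hs2 : 0 < ∑ i, (1 - y i) := by
      apply Finset.sum_pos' (fun i _ => by linarith [(hy01 i).2])
        ⟨i0, Finset.mem_univ _, by rw [hi0]; norm_num⟩
    refine ⟨hy01, hs1, hs2, ?_⟩
    have e1 : ∀ i, y i * y i = y i := fun i => by rcases hy i with h | h <;> rw [h] <;> ring
    have e2 : ∀ i, (1 - y i) * y i = 0 := fun i => by rcases hy i with h | h <;> rw [h] <;> ring
    simp only [e1, e2, Finset.sum_const_zero, zero_div, sub_zero, div_self hs1.ne']
    norm_num
end

section
/- Let d and n be positive integers, let q be a probability mass function on Fin d, and let X_1, …, X_n be i.i.d. random variables on a probability space, each distributed according to q. Let q̂ be the random empirical distribution, q̂(j) = (1/n)·|{i ≤ n : X_i = j}|. Then for every ε > 0, P( ‖q̂ − q‖₂ ≥ 1/√n + ε ) ≤ exp(−n ε²), and consequently P( ‖q̂ − q‖₁ ≥ √d · (1/√n + ε) ) ≤ exp(−n ε²). -/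
open MeasureTheory Finset

-- helper: monotone on Ici from HasDerivAt
lemma monoIci {F F' : ℝ → ℝ} (hd : ∀ x ∈ Set.Ici (0:ℝ), HasDerivAt F (F' x) x)
    (h0 : ∀ x ∈ Set.Ioi (0:ℝ), 0 ≤ F' x) : MonotoneOn F (Set.Ici 0) := by
  apply monotoneOn_of_deriv_nonneg (convex_Ici 0)
  · exact fun x hx => (hd x hx).continuousAt.continuousWithinAt
  · intro x hx
    rw [interior_Ici] at hx
    exact (hd x (Set.mem_Ici.2 (Set.mem_Ioi.1 hx).le)).differentiableAt.differentiableWithinAt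
  · intro x hx
    rw [interior_Ici] at hx
    rw [(hd x (Set.mem_Ici.2 (Set.mem_Ioi.1 hx).le)).deriv]
    exact h0 x hx

lemma hoeff_core (s h : ℝ) (hs0 : 0 ≤ s) (hs1 : s ≤ 1) (hh : 0 ≤ h) :
    1 - s + s * Real.exp h ≤ Real.exp (s * h + h ^ 2 / 8) := by
  set g : ℝ → ℝ := fun x => 1 - s + s * Real.exp x with hgdef
  have hg1 : ∀ x, 0 ≤ x → 1 ≤ g x := by
    intro x hx
    have h1 : 1 ≤ Real.exp x := Real.one_le_exp hx
    have := mul_le_mul_of_nonneg_left h1 hs0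
    simp only [hgdef, mul_one] at this ⊢
    linarith
  have hgpos : ∀ x, 0 ≤ x → 0 < g x := fun x hx => lt_of_lt_of_le one_pos (hg1 x hx)
  set F1 : ℝ → ℝ := fun x => s + x / 4 - s * Real.exp x / g x with hF1def
  set F : ℝ → ℝ := fun x => s * x + x ^ 2 / 8 - Real.log (g x) with hFdef
  have hdg : ∀ x : ℝ, HasDerivAt g (s * Real.exp x) x := by
    intro x
    exact ((Real.hasDerivAt_exp x).const_mul s).const_add (1 - s)
  have hdF : ∀ x ∈ Set.Ici (0:ℝ), HasDerivAt F (F1 x) x := by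
    intro x hx
    have h1 : HasDerivAt (fun x : ℝ => s * x + x ^ 2 / 8) (s + 2 * x / 8) x := by
      exact (((hasDerivAt_id x).const_mul s).add ((hasDerivAt_pow 2 x).div_const 8)).congr_deriv (by norm_num)
    have h2 : HasDerivAt (fun x => Real.log (g x)) (s * Real.exp x / g x) x :=
      (hdg x).log (ne_of_gt (hgpos x hx))
    have := h1.sub h2
    refine this.congr_deriv ?_
    simp only [hF1def]
    ring
  have hdF1 : ∀ x ∈ Set.Ici (0:ℝ), HasDerivAt F1
      (1/4 - s * Real.exp x * (1 - s) / (g x) ^ 2) x := by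
    intro x hx
    have h1 : HasDerivAt (fun x : ℝ => s + x / 4) (1/4) x := by
      simpa using ((hasDerivAt_id x).div_const 4).const_add s
    have h2 : HasDerivAt (fun x => s * Real.exp x) (s * Real.exp x) x :=
      (Real.hasDerivAt_exp x).const_mul s
    have h3 := h2.div (hdg x) (ne_of_gt (hgpos x hx))
    have := h1.sub h3
    refine this.congr_deriv ?_
    have hgx : g x = 1 - s + s * Real.exp x := rfl
    rw [hgx]
    ring
  have hF1mono : MonotoneOn F1 (Set.Ici 0) := by
    apply monoIci hdF1
    intro x hx
    have hgx := hgpos x (le_of_lt hx)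
    rw [sub_nonneg, div_le_iff₀ (by positivity)]
    have hgeq : g x = (1 - s) + s * Real.exp x := rfl
    nlinarith [sq_nonneg ((1 - s) - s * Real.exp x), Real.exp_pos x]
  have hF10 : F1 0 = 0 := by
    simp only [hF1def, hgdef, Real.exp_zero, mul_one]
    have : 1 - s + s = 1 := by ring
    rw [this]
    simp
  have hF1nonneg : ∀ x ∈ Set.Ioi (0:ℝ), 0 ≤ F1 x := by
    intro x hx
    have := hF1mono (Set.self_mem_Ici) (Set.mem_Ici.2 hx.le) hx.le
    rw [hF10] at this; exact this
  have hFmono : MonotoneOn F (Set.Ici 0) := monoIci hdF hF1nonneg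
  have hF0 : F 0 = 0 := by
    simp only [hFdef, hgdef, Real.exp_zero, mul_one]
    have : 1 - s + s = 1 := by ring
    rw [this]
    simp
  have hFh : 0 ≤ F h := by
    have := hFmono Set.self_mem_Ici (Set.mem_Ici.2 hh) hh
    rw [hF0] at this; exact this
  have hlog : Real.log (g h) ≤ s * h + h ^ 2 / 8 := by
    simp only [hFdef] at hFh; linarith
  calc g h = Real.exp (Real.log (g h)) := (Real.exp_log (hgpos h hh)).symm
    _ ≤ Real.exp (s * h + h ^ 2 / 8) := Real.exp_le_exp.2 hlog

lemma hoeff_sum {ι : Type*} [Fintype ι] (p g : ι → ℝ) (hp0 : ∀ v, 0 ≤ p v)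
    (hp1 : ∑ v, p v = 1) (a c : ℝ) (hc : 0 ≤ c)
    (hga : ∀ v, a ≤ g v) (hgb : ∀ v, g v ≤ a + c) :
    ∑ v, p v * Real.exp (g v) ≤ Real.exp ((∑ v, p v * g v) + c ^ 2 / 8) := by
  rcases eq_or_lt_of_le hc with hc0 | hc0
  · -- c = 0, all g v = a
    have hg : ∀ v, g v = a := fun v => le_antisymm (by have := hgb v; linarith) (hga v)
    simp only [hg]
    rw [← Finset.sum_mul, ← Finset.sum_mul, hp1, ← hc0]
    simp
  · set μ := ∑ v, p v * g v with hμdef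
    set s := (μ - a) / c with hsdef
    have hμa : a ≤ μ := by
      have : ∑ v, p v * a ≤ μ := by
        apply Finset.sum_le_sum
        intro v _
        exact mul_le_mul_of_nonneg_left (hga v) (hp0 v)
      rwa [← Finset.sum_mul, hp1, one_mul] at this
    have hμb : μ ≤ a + c := by
      have : μ ≤ ∑ v, p v * (a + c) := by
        apply Finset.sum_le_sum
        intro v _
        exact mul_le_mul_of_nonneg_left (hgb v) (hp0 v)
      rwa [← Finset.sum_mul, hp1, one_mul] at this
    have hs0 : 0 ≤ s := div_nonneg (by linarith) hc -- fix: hc is 0 ≤ c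
    have hs1 : s ≤ 1 := by
      rw [hsdef, div_le_one hc0]; linarith
    -- convexity step
    have hstep : ∀ v, Real.exp (g v) ≤
        (1 - (g v - a) / c) * Real.exp a + ((g v - a) / c) * Real.exp (a + c) := by
      intro v
      have hθ0 : 0 ≤ (g v - a) / c := div_nonneg (by linarith [hga v]) hc0.le
      have hθ1 : (g v - a) / c ≤ 1 := by rw [div_le_one hc0]; linarith [hgb v]
      have h1 : (1 - (g v - a) / c) + (g v - a) / c = 1 := by ring
      have := convexOn_exp.2 (Set.mem_univ a) (Set.mem_univ (a + c))
        (by linarith : (0:ℝ) ≤ 1 - (g v - a) / c) hθ0 h1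
      have harg : (1 - (g v - a) / c) • a + ((g v - a) / c) • (a + c) = g v := by
        have hc' : c ≠ 0 := hc0.ne'
        field_simp
        ring_nf
        field_simp
      rw [harg] at this
      simpa using this
    have hsum : ∑ v, p v * Real.exp (g v)
        ≤ (1 - s) * Real.exp a + s * Real.exp (a + c) := by
      calc ∑ v, p v * Real.exp (g v)
          ≤ ∑ v, p v * ((1 - (g v - a) / c) * Real.exp a + ((g v - a) / c) * Real.exp (a + c)) :=
            Finset.sum_le_sum fun v _ => mul_le_mul_of_nonneg_left (hstep v) (hp0 v)
        _ = (1 - s) * Real.exp a + s * Real.exp (a + c) := by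
            have expand : ∀ v, p v * ((1 - (g v - a) / c) * Real.exp a
                + ((g v - a) / c) * Real.exp (a + c))
                = p v * Real.exp a + (p v * g v - p v * a) * ((Real.exp (a+c) - Real.exp a)/c) := by
              intro v; field_simp; ring
            simp only [expand]
            rw [Finset.sum_add_distrib, ← Finset.sum_mul, hp1, ← Finset.sum_mul, Finset.sum_sub_distrib,
              ← Finset.sum_mul, ← hμdef, hp1]
            simp only [hsdef]
            field_simp
            ring
    have hkey : (1 - s) * Real.exp a + s * Real.exp (a + c)
        ≤ Real.exp (μ + c ^ 2 / 8) := by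
      have h1 : (1 - s) * Real.exp a + s * Real.exp (a + c)
          = Real.exp a * (1 - s + s * Real.exp c) := by
        rw [Real.exp_add]; ring
      have h2 := hoeff_core s c hs0 hs1 hc0.le
      calc (1 - s) * Real.exp a + s * Real.exp (a + c)
          = Real.exp a * (1 - s + s * Real.exp c) := h1
        _ ≤ Real.exp a * Real.exp (s * c + c ^ 2 / 8) :=
            mul_le_mul_of_nonneg_left h2 (Real.exp_pos a).le
        _ = Real.exp (a + (s * c + c ^ 2 / 8)) := by rw [← Real.exp_add]
        _ = Real.exp (μ + c ^ 2 / 8) := by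
            congr 1
            have : s * c = μ - a := by
              rw [hsdef]; field_simp
            rw [this]; ring
    exact hsum.trans hkey



section
variable {d : ℕ} (q : Fin d → ℝ)

lemma sum_pi_prod {m : ℕ} (F : Fin m → Fin d → ℝ) :
    ∑ x : Fin m → Fin d, ∏ i, F i (x i) = ∏ i, ∑ v, F i v := by
  rw [Finset.prod_univ_sum, Fintype.piFinset_univ]

-- total mass of product weight
lemma sumW (hq1 : ∑ j, q j = 1) (m : ℕ) :
    ∑ x : Fin m → Fin d, (∏ i, q (x i)) = 1 := by
  rw [sum_pi_prod (fun _ v => q v)]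
  simp [hq1]

lemma Wnonneg (hq0 : ∀ j, 0 ≤ q j) (m : ℕ) (x : Fin m → Fin d) :
    0 ≤ ∏ i, q (x i) :=
  Finset.prod_nonneg fun i _ => hq0 _

-- marginal: one coordinate
lemma E_one (hq1 : ∑ j, q j = 1) (m : ℕ) (i : Fin m) (h : Fin d → ℝ) :
    ∑ x : Fin m → Fin d, (∏ i', q (x i')) * h (x i) = ∑ v, q v * h v := by
  have key : ∀ x : Fin m → Fin d,
      (∏ i', q (x i')) * h (x i) = ∏ i', (q (x i') * if i' = i then h (x i') else 1) := by
    intro x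
    rw [Finset.prod_mul_distrib, Finset.prod_ite_eq' univ i (fun i' => h (x i'))]
    simp
  simp only [key]
  rw [sum_pi_prod (fun i' v => q v * if i' = i then h v else 1)]
  have : ∀ i' : Fin m, (∑ v, q v * if i' = i then h v else 1)
      = if i' = i then ∑ v, q v * h v else 1 := by
    intro i'
    split_ifs with hh
    · simp [hh]
    · simp [hq1]
  simp only [this]
  rw [Finset.prod_ite_eq' univ i (fun _ => ∑ v, q v * h v)]
  simp

-- two distinct coordinates
lemma E_two (hq1 : ∑ j, q j = 1) (m : ℕ) (i i' : Fin m) (hii : i ≠ i')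
    (h k : Fin d → ℝ) :
    ∑ x : Fin m → Fin d, (∏ i'', q (x i'')) * (h (x i) * k (x i'))
      = (∑ v, q v * h v) * (∑ v, q v * k v) := by
  have key : ∀ x : Fin m → Fin d,
      (∏ i'', q (x i'')) * (h (x i) * k (x i'))
        = ∏ i'', (q (x i'') * (if i'' = i then h (x i'') else if i'' = i' then k (x i'') else 1)) := by
    intro x
    rw [Finset.prod_mul_distrib]
    congr 1
    rw [← Finset.mul_prod_erase univ _ (mem_univ i)]
    rw [← Finset.mul_prod_erase (univ.erase i) _ (Finset.mem_erase.2 ⟨Ne.symm hii, mem_univ i'⟩)]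
    have h1 : (if i = i then h (x i) else if i = i' then k (x i) else 1) = h (x i) := by simp
    have h2 : (if i' = i then h (x i') else if i' = i' then k (x i') else 1) = k (x i') := by
      simp [Ne.symm hii]
    rw [h1, h2]
    have h3 : ∀ j ∈ (univ.erase i).erase i',
        (if j = i then h (x j) else if j = i' then k (x j) else 1) = 1 := by
      intro j hj
      rw [Finset.mem_erase, Finset.mem_erase] at hj
      simp [hj.1, hj.2.1]
    rw [Finset.prod_congr rfl h3]
    simp
  simp only [key]
  rw [sum_pi_prod (fun i'' v => q v * (if i'' = i then h v else if i'' = i' then k v else 1))]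
  have : ∀ i'' : Fin m, (∑ v, q v * (if i'' = i then h v else if i'' = i' then k v else 1))
      = if i'' = i then ∑ v, q v * h v else if i'' = i' then ∑ v, q v * k v else 1 := by
    intro i''
    split_ifs with h1 h2
    · rfl
    · rfl
    · simp [hq1]
  simp only [this]
  rw [← Finset.mul_prod_erase univ _ (mem_univ i)]
  rw [← Finset.mul_prod_erase (univ.erase i) _ (Finset.mem_erase.2 ⟨Ne.symm hii, mem_univ i'⟩)]
  have h1 : (if i = i then ∑ v, q v * h v else if i = i' then ∑ v, q v * k v else 1)
      = ∑ v, q v * h v := by simp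
  have h2 : (if i' = i then ∑ v, q v * h v else if i' = i' then ∑ v, q v * k v else 1)
      = ∑ v, q v * k v := by simp [Ne.symm hii]
  rw [h1, h2]
  have h3 : ∀ j ∈ (univ.erase i).erase i',
      (if j = i then ∑ v, q v * h v else if j = i' then ∑ v, q v * k v else 1) = 1 := by
    intro j hj
    rw [Finset.mem_erase, Finset.mem_erase] at hj
    simp [hj.1, hj.2.1]
  rw [Finset.prod_congr rfl h3]
  simp

-- McDiarmid mgf tensorization on the finite product space
lemma tensor (hq0 : ∀ j, 0 ≤ q j) (hq1 : ∑ j, q j = 1) :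
    ∀ (m : ℕ) (f : (Fin m → Fin d) → ℝ) (c : ℝ), 0 ≤ c →
    (∀ (x : Fin m → Fin d) (i : Fin m) (v : Fin d), f x - f (Function.update x i v) ≤ c) →
    ∑ x : Fin m → Fin d, (∏ i, q (x i)) * Real.exp (f x)
      ≤ Real.exp ((∑ x : Fin m → Fin d, (∏ i, q (x i)) * f x) + m * c ^ 2 / 8) := by
  intro m
  induction m with
  | zero =>
    intro f c hc hbd
    haveI : Unique (Fin 0 → Fin d) := ⟨⟨fun i => i.elim0⟩, fun x => funext fun i => i.elim0⟩
    rw [Fintype.sum_unique, Fintype.sum_unique]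
    simp
  | succ m ih =>
    intro f c hc hbd
    -- nonempty Fin d
    have hd : 0 < d := by
      by_contra hd
      push_neg at hd
      interval_cases d
      simpa using hq1
    haveI : NeZero d := ⟨hd.ne'⟩
    set W : (Fin m → Fin d) → ℝ := fun y => ∏ i, q (y i) with hW
    have hWn : ∀ y, 0 ≤ W y := Wnonneg q hq0 m
    have hW1 : ∑ y, W y = 1 := sumW q hq1 m
    have reindex : ∀ G : (Fin (m+1) → Fin d) → ℝ,
        ∑ x : Fin (m+1) → Fin d, G x = ∑ v : Fin d, ∑ y : Fin m → Fin d, G (Fin.cons v y) := by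
      intro G
      calc ∑ x : Fin (m+1) → Fin d, G x
          = ∑ p : Fin d × (Fin m → Fin d), G (Fin.cons p.1 p.2) :=
            (Fintype.sum_equiv (Fin.consEquiv fun _ => Fin d)
              (fun p => G (Fin.cons p.1 p.2)) G fun p => rfl).symm
        _ = ∑ v : Fin d, ∑ y : Fin m → Fin d, G (Fin.cons v y) := Fintype.sum_prod_type _
    have prodW : ∀ (v : Fin d) (y : Fin m → Fin d),
        (∏ i : Fin (m+1), q ((Fin.cons v y : Fin (m+1) → Fin d) i)) = q v * W y := by
      intro v y
      have h1 : (fun i : Fin (m+1) => q ((Fin.cons v y : Fin (m+1) → Fin d) i))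
          = Fin.cons (q v) (fun i => q (y i)) := Fin.comp_cons q v y
      calc (∏ i : Fin (m+1), q ((Fin.cons v y : Fin (m+1) → Fin d) i))
          = ∏ i, Fin.cons (q v) (fun i => q (y i)) i := by rw [h1]
        _ = q v * W y := by rw [Fin.prod_cons]
    set g : Fin d → ℝ := fun v => ∑ y, W y * f (Fin.cons v y) with hg
    have hIH : ∀ v, ∑ y, W y * Real.exp (f (Fin.cons v y))
        ≤ Real.exp (g v + m * c ^ 2 / 8) := by
      intro v
      apply ih (fun y => f (Fin.cons v y)) c hc
      intro y i w
      have := hbd (Fin.cons v y) i.succ w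
      rwa [← Fin.cons_update] at this
    have hgbd : ∀ v v', g v - g v' ≤ c := by
      intro v v'
      have heq : g v - g v' = ∑ y, W y * (f (Fin.cons v y) - f (Fin.cons v' y)) := by
        simp only [hg, mul_sub, Finset.sum_sub_distrib]
      rw [heq]
      calc ∑ y, W y * (f (Fin.cons v y) - f (Fin.cons v' y)) ≤ ∑ y, W y * c := by
            apply Finset.sum_le_sum
            intro y _
            apply mul_le_mul_of_nonneg_left _ (hWn y)
            have := hbd (Fin.cons v y) 0 v'
            rwa [Fin.update_cons_zero] at this
        _ = c := by rw [← Finset.sum_mul, hW1, one_mul]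
    obtain ⟨v₀, -, hv₀⟩ := Finset.exists_min_image univ g ⟨Classical.arbitrary (Fin d), mem_univ _⟩
    have hga : ∀ v, g v₀ ≤ g v := fun v => hv₀ v (mem_univ v)
    have hgb : ∀ v, g v ≤ g v₀ + c := fun v => by have := hgbd v v₀; linarith
    have hqExp := hoeff_sum q g hq0 hq1 (g v₀) c hc hga hgb
    have hEf : ∑ v, q v * g v = ∑ x : Fin (m+1) → Fin d, (∏ i, q (x i)) * f x := by
      rw [reindex (fun x => (∏ i, q (x i)) * f x)]
      refine Finset.sum_congr rfl fun v _ => ?_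
      simp only [hg, Finset.mul_sum]
      refine Finset.sum_congr rfl fun y _ => ?_
      rw [prodW]
      ring
    calc ∑ x : Fin (m+1) → Fin d, (∏ i, q (x i)) * Real.exp (f x)
        = ∑ v, ∑ y, (q v * W y) * Real.exp (f (Fin.cons v y)) := by
          rw [reindex (fun x => (∏ i, q (x i)) * Real.exp (f x))]
          exact Finset.sum_congr rfl fun v _ =>
            Finset.sum_congr rfl fun y _ => by rw [prodW]
      _ = ∑ v, q v * ∑ y, W y * Real.exp (f (Fin.cons v y)) := by
          refine Finset.sum_congr rfl fun v _ => ?_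
          rw [Finset.mul_sum]
          exact Finset.sum_congr rfl fun y _ => by ring
      _ ≤ ∑ v, q v * Real.exp (g v + m * c ^ 2 / 8) :=
          Finset.sum_le_sum fun v _ => mul_le_mul_of_nonneg_left (hIH v) (hq0 v)
      _ = (∑ v, q v * Real.exp (g v)) * Real.exp (m * c ^ 2 / 8) := by
          rw [Finset.sum_mul]
          exact Finset.sum_congr rfl fun v _ => by rw [Real.exp_add]; ring
      _ ≤ Real.exp ((∑ v, q v * g v) + c ^ 2 / 8) * Real.exp (m * c ^ 2 / 8) :=
          mul_le_mul_of_nonneg_right hqExp (Real.exp_pos _).le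
      _ = Real.exp ((∑ x : Fin (m+1) → Fin d, (∏ i, q (x i)) * f x) + (m+1 : ℕ) * c ^ 2 / 8) := by
          rw [← Real.exp_add, hEf]
          push_cast
          ring_nf
end


section c
variable {d n : ℕ} (q : Fin d → ℝ)

-- abbreviations used below (not defs, to keep things syntactic in the final theorem)
-- N j x = card, f x = ℓ2 distance

-- count as a real sum of indicators
lemma count_eq (n : ℕ) (j : Fin d) (x : Fin n → Fin d) :
    (((univ.filter fun i => x i = j).card : ℕ) : ℝ)
      = ∑ i, (if x i = j then (1:ℝ) else 0) := by
  rw [Finset.card_filter]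
  push_cast
  exact Finset.sum_congr rfl fun i _ => by split_ifs <;> norm_num

-- the indicator sum over j equals 1, and squares
lemma ind_sq_sum (a b : Fin d) :
    ∑ j, ((if a = j then (1:ℝ) else 0) - (if b = j then (1:ℝ) else 0)) ^ 2 ≤ 2 := by
  have h1 : ∀ j, ((if a = j then (1:ℝ) else 0) - (if b = j then (1:ℝ) else 0)) ^ 2
      ≤ (if a = j then (1:ℝ) else 0) ^ 2 + (if b = j then (1:ℝ) else 0) ^ 2 := by
    intro j
    have ha : (0:ℝ) ≤ (if a = j then (1:ℝ) else 0) := by split_ifs <;> norm_num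
    have hb : (0:ℝ) ≤ (if b = j then (1:ℝ) else 0) := by split_ifs <;> norm_num
    nlinarith [mul_nonneg ha hb]
  calc ∑ j, ((if a = j then (1:ℝ) else 0) - (if b = j then (1:ℝ) else 0)) ^ 2
      ≤ ∑ j, ((if a = j then (1:ℝ) else 0) ^ 2 + (if b = j then (1:ℝ) else 0) ^ 2) :=
        Finset.sum_le_sum fun j _ => h1 j
    _ = 2 := by
        rw [Finset.sum_add_distrib]
        have hA : ∀ c : Fin d, ∑ j, (if c = j then (1:ℝ) else 0) ^ 2 = 1 := by
          intro c
          have : ∀ j, (if c = j then (1:ℝ) else 0) ^ 2 = if c = j then (1:ℝ) else 0 := by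
            intro j; split_ifs <;> norm_num
          simp only [this]
          simp
        rw [hA a, hA b]
        norm_num

-- bounded differences for the ℓ2 statistic
lemma f_bdd (hn : 0 < n) (x : Fin n → Fin d) (i : Fin n) (v : Fin d) :
    Real.sqrt (∑ j, (((univ.filter fun i' => x i' = j).card : ℝ) / n - q j) ^ 2)
      - Real.sqrt (∑ j, (((univ.filter fun i' => Function.update x i v i' = j).card : ℝ) / n - q j) ^ 2)
      ≤ Real.sqrt 2 / n := by
  set y := Function.update x i v with hy
  have hnR : (0:ℝ) < n := by exact_mod_cast hn
  have key : ∀ j, (((univ.filter fun i' => x i' = j).card : ℝ))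
      - (((univ.filter fun i' => y i' = j).card : ℝ))
      = (if x i = j then (1:ℝ) else 0) - (if v = j then (1:ℝ) else 0) := by
    intro j
    rw [count_eq, count_eq, ← Finset.sum_sub_distrib]
    rw [Finset.sum_eq_single_of_mem i (mem_univ i)]
    · have : y i = v := Function.update_self i v x
      rw [this]
    · intro i' _ hne
      have : y i' = x i' := Function.update_of_ne hne v x
      rw [this, sub_self]
  set u : EuclideanSpace ℝ (Fin d) := WithLp.toLp 2 fun j => (((univ.filter fun i' => y i' = j).card : ℝ)) / n - q j with hu
  set w : EuclideanSpace ℝ (Fin d) := WithLp.toLp 2 fun j =>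
    ((if x i = j then (1:ℝ) else 0) - (if v = j then (1:ℝ) else 0)) / n with hw
  have hfx : Real.sqrt (∑ j, (((univ.filter fun i' => x i' = j).card : ℝ) / n - q j) ^ 2)
      = ‖u + w‖ := by
    rw [EuclideanSpace.norm_eq]
    congr 1
    refine Finset.sum_congr rfl fun j _ => ?_
    have happ : (u + w) j = u j + w j := rfl
    rw [happ, Real.norm_eq_abs, sq_abs, hu, hw]
    have hk := key j
    simp only []
    rw [show (((univ.filter fun i' => y i' = j).card : ℝ)) / n - q j
        + ((if x i = j then (1:ℝ) else 0) - (if v = j then (1:ℝ) else 0)) / n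
        = ((((univ.filter fun i' => y i' = j).card : ℝ))
          + ((if x i = j then (1:ℝ) else 0) - (if v = j then (1:ℝ) else 0))) / n - q j from by
      field_simp
      ring]
    rw [← hk]
    ring_nf
  have hfy : Real.sqrt (∑ j, (((univ.filter fun i' => y i' = j).card : ℝ) / n - q j) ^ 2)
      = ‖u‖ := by
    rw [EuclideanSpace.norm_eq]
    congr 1
    refine Finset.sum_congr rfl fun j _ => ?_
    rw [Real.norm_eq_abs, sq_abs]
  have hwnorm : ‖w‖ ≤ Real.sqrt 2 / n := by
    rw [EuclideanSpace.norm_eq]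
    have hsum : ∑ j, ‖w j‖ ^ 2 ≤ 2 / (n:ℝ) ^ 2 := by
      have hterm : ∀ j, ‖w j‖ ^ 2
          = ((if x i = j then (1:ℝ) else 0) - (if v = j then (1:ℝ) else 0)) ^ 2 / (n:ℝ) ^ 2 := by
        intro j
        rw [Real.norm_eq_abs, sq_abs, hw]
        exact div_pow _ _ 2
      simp only [hterm]
      rw [← Finset.sum_div]
      rw [div_le_div_iff_of_pos_right (by positivity)]
      exact ind_sq_sum (x i) v
    calc Real.sqrt (∑ j, ‖w j‖ ^ 2) ≤ Real.sqrt (2 / (n:ℝ) ^ 2) := Real.sqrt_le_sqrt hsum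
      _ = Real.sqrt 2 / n := by
          rw [Real.sqrt_div (by norm_num : (0:ℝ) ≤ 2), Real.sqrt_sq hnR.le]
  have htri : ‖u + w‖ ≤ ‖u‖ + ‖w‖ := norm_add_le u w
  rw [hfx, hfy]
  linarith
end c

section m2
variable {d n : ℕ}

-- second moment bound
lemma Ef2_le (q : Fin d → ℝ) (hq0 : ∀ j, 0 ≤ q j) (hq1 : ∑ j, q j = 1) (hn : 0 < n) :
    ∑ x : Fin n → Fin d, (∏ i, q (x i)) * (∑ j, (((univ.filter fun i => x i = j).card : ℝ) / n - q j) ^ 2)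
      ≤ 1 / n := by
  have hnR : (0:ℝ) < n := by exact_mod_cast hn
  have swap : ∑ x : Fin n → Fin d, (∏ i, q (x i)) * (∑ j, (((univ.filter fun i => x i = j).card : ℝ) / n - q j) ^ 2)
      = ∑ j, ∑ x : Fin n → Fin d, (∏ i, q (x i)) * ((((univ.filter fun i => x i = j).card : ℝ) / n - q j) ^ 2) := by
    rw [Finset.sum_comm]
    exact Finset.sum_congr rfl fun x _ => Finset.mul_sum _ _ _
  rw [swap]
  have hfix : ∀ j : Fin d, ∑ x : Fin n → Fin d, (∏ i, q (x i)) * ((((univ.filter fun i => x i = j).card : ℝ) / n - q j) ^ 2)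
      ≤ q j / n := by
    intro j
    set h : Fin d → ℝ := fun v => (if v = j then (1:ℝ) else 0) - q j with hh
    have hmean : ∑ v, q v * h v = 0 := by
      simp only [hh, mul_sub, Finset.sum_sub_distrib, mul_ite, mul_one, mul_zero]
      rw [Finset.sum_ite_eq' univ j q, ← Finset.sum_mul, hq1]
      simp
    have hsq : ∑ v, q v * (h v * h v) = q j - q j ^ 2 := by
      have hterm : ∀ v, q v * (h v * h v)
          = q v * (if v = j then (1:ℝ) else 0) * (1 - 2 * q j) + q v * q j ^ 2 := by
        intro v
        by_cases hvj : v = j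
        · simp only [hh]; rw [if_pos hvj]; ring
        · simp only [hh]; rw [if_neg hvj]; ring
      simp only [hterm]
      rw [Finset.sum_add_distrib, ← Finset.sum_mul, ← Finset.sum_mul]
      simp only [mul_ite, mul_one, mul_zero]
      rw [Finset.sum_ite_eq' univ j q, hq1]
      simp only [Finset.mem_univ, if_true, one_mul]
      ring
    have hNj : ∀ x : Fin n → Fin d, (((univ.filter fun i => x i = j).card : ℝ) / n - q j)
        = (1 / n) * ∑ i, h (x i) := by
      intro x
      rw [count_eq]
      simp only [hh, Finset.sum_sub_distrib, Finset.sum_const, card_univ, Fintype.card_fin,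
        nsmul_eq_mul]
      field_simp
    have hexpand : ∀ x : Fin n → Fin d,
        (∏ i, q (x i)) * ((((univ.filter fun i => x i = j).card : ℝ) / n - q j) ^ 2)
        = (1 / (n:ℝ) ^ 2) * ∑ i, ∑ i', (∏ i'', q (x i'')) * (h (x i) * h (x i')) := by
      intro x
      have e1 : (1 / (n:ℝ) * ∑ i, h (x i)) ^ 2
          = (1/(n:ℝ)^2) * ∑ i, ∑ i', h (x i) * h (x i') := by
        rw [← Finset.sum_mul_sum]
        ring
      rw [hNj x, e1]
      calc (∏ i, q (x i)) * ((1/(n:ℝ)^2) * ∑ i, ∑ i', h (x i) * h (x i'))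
          = (1/(n:ℝ)^2) * ((∏ i, q (x i)) * ∑ i, ∑ i', h (x i) * h (x i')) := by ring
        _ = (1 / (n:ℝ)^2) * ∑ i, ∑ i', (∏ i'', q (x i'')) * (h (x i) * h (x i')) := by
            congr 1
            rw [Finset.mul_sum]
            refine Finset.sum_congr rfl fun i _ => ?_
            rw [Finset.mul_sum]
    simp only [hexpand]
    rw [← Finset.mul_sum]
    have hinner : ∀ i : Fin n, ∑ x : Fin n → Fin d, (∏ i'', q (x i'')) * (h (x i) * h (x i))
        = q j - q j ^ 2 := by
      intro i
      have := E_one q hq1 n i (fun v => h v * h v)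
      simpa using this.trans hsq
    have houter : ∀ i : Fin n, ∑ i' : Fin n,
        ∑ x : Fin n → Fin d, (∏ i'', q (x i'')) * (h (x i) * h (x i'))
        = q j - q j ^ 2 := by
      intro i
      rw [← Finset.add_sum_erase _ _ (mem_univ i)]
      rw [hinner i]
      have hzero : ∀ i' ∈ univ.erase i,
          ∑ x : Fin n → Fin d, (∏ i'', q (x i'')) * (h (x i) * h (x i')) = 0 := by
        intro i' hi'
        have hne : i ≠ i' := fun hEq => (Finset.mem_erase.1 hi').1 hEq.symm
        have := E_two q hq1 n i i' hne h h
        rw [this, hmean]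
        simp
      rw [Finset.sum_congr rfl hzero]
      simp
    have hsum2 : ∑ i : Fin n, ∑ i' : Fin n,
        ∑ x : Fin n → Fin d, (∏ i'', q (x i'')) * (h (x i) * h (x i'))
        = n * (q j - q j ^ 2) := by
      rw [Finset.sum_congr rfl fun i _ => houter i]
      simp [mul_comm]
      ring
    have hswap : ∑ x : Fin n → Fin d, ∑ i : Fin n, ∑ i' : Fin n,
        (∏ i'', q (x i'')) * (h (x i) * h (x i'))
        = ∑ i : Fin n, ∑ i' : Fin n, ∑ x : Fin n → Fin d,
          (∏ i'', q (x i'')) * (h (x i) * h (x i')) := by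
      rw [Finset.sum_comm]
      exact Finset.sum_congr rfl fun i _ => Finset.sum_comm
    rw [hswap, hsum2]
    rw [show (1:ℝ)/(n:ℝ)^2 * ((n:ℝ) * (q j - q j ^ 2)) = (q j - q j ^ 2)/n from by
      field_simp]
    gcongr
    nlinarith [sq_nonneg (q j)]
  calc ∑ j, ∑ x : Fin n → Fin d, (∏ i, q (x i)) * ((((univ.filter fun i => x i = j).card : ℝ) / n - q j) ^ 2)
      ≤ ∑ j, q j / n := Finset.sum_le_sum fun j _ => hfix j
    _ = 1 / n := by rw [← Finset.sum_div, hq1]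
end m2

section m3
variable {d n : ℕ}

lemma Ef_le (q : Fin d → ℝ) (hq0 : ∀ j, 0 ≤ q j) (hq1 : ∑ j, q j = 1) (hn : 0 < n) :
    ∑ x : Fin n → Fin d, (∏ i, q (x i))
        * Real.sqrt (∑ j, (((univ.filter fun i => x i = j).card : ℝ) / n - q j) ^ 2)
      ≤ 1 / Real.sqrt n := by
  set W : (Fin n → Fin d) → ℝ := fun x => ∏ i, q (x i) with hW
  set f : (Fin n → Fin d) → ℝ := fun x =>
    Real.sqrt (∑ j, (((univ.filter fun i => x i = j).card : ℝ) / n - q j) ^ 2) with hf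
  have hWn : ∀ x, 0 ≤ W x := Wnonneg q hq0 n
  have hSnn : ∀ x : Fin n → Fin d,
      0 ≤ ∑ j, (((univ.filter fun i => x i = j).card : ℝ) / n - q j) ^ 2 :=
    fun x => Finset.sum_nonneg fun j _ => sq_nonneg _
  have CS := Real.sum_mul_le_sqrt_mul_sqrt univ (fun x => Real.sqrt (W x))
    (fun x => Real.sqrt (W x) * f x)
  have h1 : ∀ x : Fin n → Fin d,
      Real.sqrt (W x) * (Real.sqrt (W x) * f x) = W x * f x := by
    intro x; rw [← mul_assoc, Real.mul_self_sqrt (hWn x)]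
  have h2 : ∀ x : Fin n → Fin d, Real.sqrt (W x) ^ 2 = W x :=
    fun x => Real.sq_sqrt (hWn x)
  have h3 : ∀ x : Fin n → Fin d, (Real.sqrt (W x) * f x) ^ 2
      = W x * (∑ j, (((univ.filter fun i => x i = j).card : ℝ) / n - q j) ^ 2) := by
    intro x
    rw [mul_pow, Real.sq_sqrt (hWn x), hf, Real.sq_sqrt (hSnn x)]
  simp only [h1, h2, h3] at CS
  have hsum1 : ∑ x : Fin n → Fin d, W x = 1 := sumW q hq1 n
  rw [hsum1, Real.sqrt_one, one_mul] at CS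
  calc ∑ x : Fin n → Fin d, W x * f x
      ≤ Real.sqrt (∑ x : Fin n → Fin d,
          W x * (∑ j, (((univ.filter fun i => x i = j).card : ℝ) / n - q j) ^ 2)) := CS
    _ ≤ Real.sqrt (1 / n) := Real.sqrt_le_sqrt (Ef2_le q hq0 hq1 hn)
    _ = 1 / Real.sqrt n := by rw [one_div, one_div, Real.sqrt_inv]

lemma main_combin (hd : 0 < d) (hn : 0 < n) (q : Fin d → ℝ)
    (hq0 : ∀ j, 0 ≤ q j) (hq1 : ∑ j, q j = 1) (ε : ℝ) (hε : 0 < ε) :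
    ∑ x ∈ univ.filter (fun x : Fin n → Fin d =>
        1 / Real.sqrt n + ε ≤ Real.sqrt (∑ j, (((univ.filter fun i => x i = j).card : ℝ) / n - q j) ^ 2)),
      ∏ i, q (x i) ≤ Real.exp (-((n:ℝ) * ε ^ 2)) := by
  have hnR : (0:ℝ) < n := by exact_mod_cast hn
  have hsn : (0:ℝ) < Real.sqrt n := Real.sqrt_pos.2 hnR
  set W : (Fin n → Fin d) → ℝ := fun x => ∏ i, q (x i) with hW
  set f : (Fin n → Fin d) → ℝ := fun x =>
    Real.sqrt (∑ j, (((univ.filter fun i => x i = j).card : ℝ) / n - q j) ^ 2) with hf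
  have hWn : ∀ x, 0 ≤ W x := Wnonneg q hq0 n
  set r : ℝ := 1 / Real.sqrt n + ε with hr
  set t : ℝ := 2 * n * ε with ht
  have htpos : 0 < t := by positivity
  set c : ℝ := Real.sqrt 2 / n with hc
  have hcpos : 0 ≤ c := by positivity
  have hc2 : c ^ 2 = 2 / (n:ℝ) ^ 2 := by
    rw [hc, div_pow, Real.sq_sqrt (by norm_num : (0:ℝ) ≤ 2)]
  have hbd : ∀ (x : Fin n → Fin d) (i : Fin n) (v : Fin d),
      t * f x - t * f (Function.update x i v) ≤ t * c := by
    intro x i v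
    rw [← mul_sub]
    exact mul_le_mul_of_nonneg_left (f_bdd q hn x i v) htpos.le
  have htensor := tensor q hq0 hq1 n (fun x => t * f x) (t * c)
    (by positivity) hbd
  have hEf := Ef_le q hq0 hq1 hn
  calc ∑ x ∈ univ.filter (fun x : Fin n → Fin d => r ≤ f x), W x
      ≤ ∑ x ∈ univ.filter (fun x : Fin n → Fin d => r ≤ f x),
          W x * Real.exp (t * (f x - r)) := by
        apply Finset.sum_le_sum
        intro x hx
        have hrx : r ≤ f x := (Finset.mem_filter.1 hx).2
        have : (1:ℝ) ≤ Real.exp (t * (f x - r)) :=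
          Real.one_le_exp (by nlinarith)
        exact le_mul_of_one_le_right (hWn x) this
    _ ≤ ∑ x : Fin n → Fin d, W x * Real.exp (t * (f x - r)) := by
        apply Finset.sum_le_sum_of_subset_of_nonneg (Finset.filter_subset _ _)
        intro x _ _
        exact mul_nonneg (hWn x) (Real.exp_pos _).le
    _ = Real.exp (-(t * r)) * ∑ x : Fin n → Fin d, W x * Real.exp (t * f x) := by
        rw [Finset.mul_sum]
        refine Finset.sum_congr rfl fun x _ => ?_
        rw [show t * (f x - r) = t * f x + -(t * r) from by ring, Real.exp_add]
        ring
    _ ≤ Real.exp (-(t * r)) * Real.exp ((∑ x : Fin n → Fin d, W x * (t * f x))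
          + n * (t * c) ^ 2 / 8) :=
        mul_le_mul_of_nonneg_left htensor (Real.exp_pos _).le
    _ ≤ Real.exp (-(t * r)) * Real.exp (t * (1 / Real.sqrt n) + n * (t * c) ^ 2 / 8) := by
        apply mul_le_mul_of_nonneg_left _ (Real.exp_pos _).le
        rw [Real.exp_le_exp]
        have : ∑ x : Fin n → Fin d, W x * (t * f x) = t * ∑ x : Fin n → Fin d, W x * f x := by
          rw [Finset.mul_sum]
          exact Finset.sum_congr rfl fun x _ => by ring
        rw [this]
        have := mul_le_mul_of_nonneg_left hEf htpos.le
        linarith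
    _ = Real.exp (-(t * r) + (t * (1 / Real.sqrt n) + n * (t * c) ^ 2 / 8)) := by
        rw [← Real.exp_add]
    _ = Real.exp (-((n:ℝ) * ε ^ 2)) := by
        congr 1
        rw [mul_pow, hc2, hr, ht]
        field_simp
        ring
end m3

lemma ofReal_prod' {ι : Type*} (s : Finset ι) (f : ι → ℝ) (h : ∀ i ∈ s, 0 ≤ f i) :
    ENNReal.ofReal (∏ i ∈ s, f i) = ∏ i ∈ s, ENNReal.ofReal (f i) := by
  induction s using Finset.cons_induction with
  | empty => simp
  | cons a s ha ih =>
    rw [Finset.prod_cons, Finset.prod_cons, ENNReal.ofReal_mul (h a (Finset.mem_cons_self a s)),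
      ih fun i hi => h i (Finset.mem_cons_of_mem hi)]

open MeasureTheory in
theorem empirical_distribution_concentration'
    {Ω : Type*} [MeasurableSpace Ω] (P : Measure Ω) [IsProbabilityMeasure P]
    (d n : ℕ) (hd : 0 < d) (hn : 0 < n)
    (q : Fin d → ℝ) (hq0 : ∀ j, 0 ≤ q j) (hq1 : ∑ j, q j = 1)
    (X : Fin n → Ω → Fin d) (hmeas : ∀ i, Measurable (X i))
    (hindep : ProbabilityTheory.iIndepFun X P)
    (hlaw : ∀ i j, P {ω | X i ω = j} = ENNReal.ofReal (q j))
    (ε : ℝ) (hε : 0 < ε) :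
    P {ω | Real.sqrt (∑ j, ((((univ.filter fun i => X i ω = j).card : ℝ) / n - q j) ^ 2))
          ≥ 1 / Real.sqrt n + ε} ≤ ENNReal.ofReal (Real.exp (-(n * ε ^ 2))) ∧
    P {ω | (∑ j, |((univ.filter fun i => X i ω = j).card : ℝ) / n - q j|)
          ≥ Real.sqrt d * (1 / Real.sqrt n + ε)} ≤ ENNReal.ofReal (Real.exp (-(n * ε ^ 2))) := by
  set r : ℝ := 1 / Real.sqrt n + ε with hr
  set T : Finset (Fin n → Fin d) := univ.filter (fun x : Fin n → Fin d =>
    r ≤ Real.sqrt (∑ j, (((univ.filter fun i => x i = j).card : ℝ) / n - q j) ^ 2)) with hT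
  set A : (Fin n → Fin d) → Set Ω := fun x => ⋂ i, X i ⁻¹' {x i} with hA
  have hset : {ω | Real.sqrt (∑ j, ((((univ.filter fun i => X i ω = j).card : ℝ) / n - q j) ^ 2))
      ≥ r} = ⋃ x ∈ T, A x := by
    ext ω
    simp only [Set.mem_setOf_eq, Set.mem_iUnion, Set.mem_iInter, Set.mem_preimage,
      Set.mem_singleton_iff, hT, Finset.mem_filter, Finset.mem_univ, true_and, hA, ge_iff_le]
    constructor
    · intro hge
      exact ⟨fun i => X i ω, hge, fun i => rfl⟩
    · rintro ⟨x, hx, hxi⟩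
      have hfun : (fun i => X i ω) = x := funext hxi
      simp only [hxi]
      exact hx
  have hAmeas : ∀ x : Fin n → Fin d, MeasurableSet (A x) :=
    fun x => MeasurableSet.iInter fun i => (hmeas i) (measurableSet_singleton _)
  have hdisj : (T : Set (Fin n → Fin d)).PairwiseDisjoint A := by
    intro x _ y _ hxy
    rw [Function.onFun, Set.disjoint_left]
    intro ω hx hy
    apply hxy
    funext i
    have h1 : X i ω = x i := by
      have := Set.mem_iInter.1 hx i; exact this
    have h2 : X i ω = y i := by
      have := Set.mem_iInter.1 hy i; exact this
    rw [← h1, h2]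
  have hPA : ∀ x : Fin n → Fin d, P (A x) = ENNReal.ofReal (∏ i, q (x i)) := by
    intro x
    rw [hA]
    rw [hindep.meas_iInter (fun i => ⟨{x i}, measurableSet_singleton _, rfl⟩)]
    rw [ofReal_prod' univ (fun i => q (x i)) (fun i _ => hq0 _)]
    refine Finset.prod_congr rfl fun i _ => ?_
    exact hlaw i (x i)
  have hP2 : P {ω | Real.sqrt (∑ j, ((((univ.filter fun i => X i ω = j).card : ℝ) / n - q j) ^ 2))
      ≥ r} = ENNReal.ofReal (∑ x ∈ T, ∏ i, q (x i)) := by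
    rw [hset, measure_biUnion_finset hdisj (fun x _ => hAmeas x)]
    rw [ENNReal.ofReal_sum_of_nonneg (fun x _ => Finset.prod_nonneg fun i _ => hq0 _)]
    exact Finset.sum_congr rfl fun x _ => hPA x
  have hbound : P {ω | Real.sqrt (∑ j, ((((univ.filter fun i => X i ω = j).card : ℝ) / n - q j) ^ 2))
      ≥ r} ≤ ENNReal.ofReal (Real.exp (-(n * ε ^ 2))) := by
    rw [hP2]
    exact ENNReal.ofReal_le_ofReal (main_combin hd hn q hq0 hq1 ε hε)
  constructor
  · exact hbound
  · refine le_trans (measure_mono ?_) hbound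
    intro ω hω
    simp only [Set.mem_setOf_eq, ge_iff_le] at hω ⊢
    set v : Fin d → ℝ := fun j => ((univ.filter fun i => X i ω = j).card : ℝ) / n - q j with hv
    have hCS : (∑ j, |v j|) ^ 2 ≤ (d : ℝ) * ∑ j, (v j) ^ 2 := by
      have := sq_sum_le_card_mul_sum_sq (s := univ) (f := fun j => |v j|)
      simpa [sq_abs, card_univ] using this
    have hl1 : ∑ j, |v j| ≤ Real.sqrt d * Real.sqrt (∑ j, (v j) ^ 2) := by
      have h1 : ∑ j, |v j| = Real.sqrt ((∑ j, |v j|) ^ 2) :=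
        (Real.sqrt_sq (Finset.sum_nonneg fun j _ => abs_nonneg _)).symm
      rw [h1, ← Real.sqrt_mul (by positivity : (0:ℝ) ≤ (d:ℝ))]
      exact Real.sqrt_le_sqrt hCS
    have hdpos : (0:ℝ) < Real.sqrt d := Real.sqrt_pos.2 (by exact_mod_cast hd)
    have : Real.sqrt d * r ≤ Real.sqrt d * Real.sqrt (∑ j, (v j) ^ 2) :=
      le_trans hω hl1
    exact le_of_mul_le_mul_left this hdpos


/-- ℓ2/ℓ1 concentration for the empirical distribution of `n` i.i.d. samples from a
distribution `q` on `Fin d` (Proposition A.8 of Agarwal et al.): for every `ε > 0`,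
`P(‖q̂ − q‖₂ ≥ 1/√n + ε) ≤ exp(−nε²)`, and consequently
`P(‖q̂ − q‖₁ ≥ √d (1/√n + ε)) ≤ exp(−nε²)`. -/
theorem empirical_distribution_concentration
    {Ω : Type*} [MeasurableSpace Ω] (P : Measure Ω) [IsProbabilityMeasure P]
    (d n : ℕ) (hd : 0 < d) (hn : 0 < n)
    (q : Fin d → ℝ) (hq0 : ∀ j, 0 ≤ q j) (hq1 : ∑ j, q j = 1)
    (X : Fin n → Ω → Fin d) (hmeas : ∀ i, Measurable (X i))
    (hindep : ProbabilityTheory.iIndepFun X P)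
    (hlaw : ∀ i j, P {ω | X i ω = j} = ENNReal.ofReal (q j))
    (ε : ℝ) (hε : 0 < ε) :
    P {ω | Real.sqrt (∑ j, ((((univ.filter fun i => X i ω = j).card : ℝ) / n - q j) ^ 2))
          ≥ 1 / Real.sqrt n + ε} ≤ ENNReal.ofReal (Real.exp (-(n * ε ^ 2))) ∧
    P {ω | (∑ j, |((univ.filter fun i => X i ω = j).card : ℝ) / n - q j|)
          ≥ Real.sqrt d * (1 / Real.sqrt n + ε)} ≤ ENNReal.ofReal (Real.exp (-(n * ε ^ 2))) :=
  empirical_distribution_concentration' P d n hd hn q hq0 hq1 X hmeas hindep hlaw ε hε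
end

section
/- There exists a universal constant c > 0 with the following property. Let the state space be 𝒮 = Π_{i<k} C_i, a product of k nonempty finite types all of common cardinality |c|, and let 𝒜 be a nonempty finite action set. Suppose the transition kernel P : 𝒮 × 𝒜 → PMF 𝒮 is locally factored: for each i < k there is a finite parent space X_i, a parent map pa_i : 𝒮 × 𝒜 → X_i, and a conditional distribution P_i : X_i → PMF C_i such that P(s,a) is the product distribution ⊗_{i<k} P_i(pa_i(s,a)). For each i < k and each parent value x ∈ X_i, let the learned mechanism P̂_i(·|x) be the empirical frequency distribution of n i.i.d. samples drawn from P_i(·|x) (all defined on a common probability space), and let P̂(s,a) = ⊗_{i<k} P̂_i(pa_i(s,a)). Then for all ε > 0 and δ ∈ (0,1): if n ≥ c · k² · |c| · log(|𝒮||𝒜|/δ) / ε², then with probability at least 1 − δ, max_{(s,a) ∈ 𝒮×𝒜} ‖P(s,a) − P̂(s,a)‖₁ ≤ ε. -/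
open scoped ENNReal
open MeasureTheory ProbabilityTheory Finset Real

lemma sum_pi_prod_s11 {k : ℕ} {C : Fin k → Type} [∀ i, Fintype (C i)] (f : ∀ i, C i → ℝ) :
    ∑ t : ∀ j, C j, ∏ i, f i (t i) = ∏ i, ∑ c, f i c :=
  (Fintype.prod_sum f).symm

lemma telescope_l1 {k : ℕ} {C : Fin k → Type} [∀ i, Fintype (C i)]
    (p q : ∀ i, C i → ℝ) (hp : ∀ i c, 0 ≤ p i c) (hq : ∀ i c, 0 ≤ q i c)
    (hp1 : ∀ i, ∑ c, p i c = 1) (hq1 : ∀ i, ∑ c, q i c = 1) :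
    ∑ t : ∀ j, C j, |(∏ i, p i (t i)) - ∏ i, q i (t i)| ≤ ∑ i, ∑ c, |p i c - q i c| := by
  classical
  set H : ℕ → (∀ j, C j) → ℝ :=
    fun m t => ∏ i : Fin k, (if i.val < m then q i (t i) else p i (t i)) with hH
  have h0 : ∀ t, H 0 t = ∏ i, p i (t i) := fun t => by simp [hH]
  have hk : ∀ t, H k t = ∏ i, q i (t i) := fun t => by
    rw [hH]
    exact Finset.prod_congr rfl fun i _ => by simp [i.isLt]
  -- step bound
  have step : ∀ m : ℕ, (hm : m < k) →
      ∑ t : ∀ j, C j, |H m t - H (m+1) t| = ∑ c, |p ⟨m, hm⟩ c - q ⟨m, hm⟩ c| := by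
    intro m hm
    set i₀ : Fin k := ⟨m, hm⟩ with hi₀
    set g : ∀ i, C i → ℝ := fun j c =>
      if j = i₀ then |p j c - q j c| else if j.val < m then q j c else p j c with hg
    have hpt : ∀ t : ∀ j, C j, |H m t - H (m+1) t| = ∏ j, g j (t j) := by
      intro t
      have e1 : H m t = p i₀ (t i₀) * ∏ j ∈ univ.erase i₀,
          (if j.val < m then q j (t j) else p j (t j)) := by
        rw [hH]
        simp only []
        rw [← Finset.mul_prod_erase univ _ (Finset.mem_univ i₀)]
        simp [hi₀]
      have e2 : H (m+1) t = q i₀ (t i₀) * ∏ j ∈ univ.erase i₀,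
          (if j.val < m then q j (t j) else p j (t j)) := by
        rw [hH]
        simp only []
        rw [← Finset.mul_prod_erase univ _ (Finset.mem_univ i₀)]
        have h1 : (if (i₀ : Fin k).val < m + 1 then q i₀ (t i₀) else p i₀ (t i₀)) = q i₀ (t i₀) := by
          simp [hi₀]
        rw [h1]
        congr 1
        refine Finset.prod_congr rfl fun j hj => ?_
        have hne : j.val ≠ m := by
          intro hjm
          exact (Finset.mem_erase.1 hj).1 (by rw [hi₀]; exact Fin.ext hjm)
        have h2 : (j.val < m + 1) ↔ (j.val < m) := by omega
        simp [h2]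
      have e3 : ∏ j, g j (t j) = |p i₀ (t i₀) - q i₀ (t i₀)| * ∏ j ∈ univ.erase i₀,
          (if j.val < m then q j (t j) else p j (t j)) := by
        rw [← Finset.mul_prod_erase univ _ (Finset.mem_univ i₀)]
        have h1 : g i₀ (t i₀) = |p i₀ (t i₀) - q i₀ (t i₀)| := by simp [hg]
        rw [h1]
        congr 1
        refine Finset.prod_congr rfl fun j hj => ?_
        simp [hg, (Finset.mem_erase.1 hj).1]
      rw [e1, e2, e3, ← sub_mul, abs_mul]
      congr 1
      exact abs_of_nonneg (Finset.prod_nonneg fun j _ => by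
        by_cases hjm : j.val < m <;> simp [hjm, hp, hq])
    calc ∑ t : ∀ j, C j, |H m t - H (m+1) t| = ∑ t : ∀ j, C j, ∏ j, g j (t j) :=
          Finset.sum_congr rfl fun t _ => hpt t
      _ = ∏ j, ∑ c, g j c := sum_pi_prod_s11 g
      _ = ∑ c, g i₀ c := by
          rw [← Finset.mul_prod_erase univ _ (Finset.mem_univ i₀)]
          have h1 : ∀ j ∈ univ.erase i₀, ∑ c, g j c = 1 := by
            intro j hj
            have hne := (Finset.mem_erase.1 hj).1
            by_cases hjm : j.val < m <;> simp [hg, hne, hjm, hp1, hq1]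
          rw [Finset.prod_congr rfl h1]
          simp
      _ = ∑ c, |p i₀ c - q i₀ c| := Finset.sum_congr rfl fun c _ => by simp [hg]
  -- telescoping
  have tel : ∀ t : ∀ j, C j, |(∏ i, p i (t i)) - ∏ i, q i (t i)| ≤
      ∑ m ∈ Finset.range k, |H m t - H (m+1) t| := by
    intro t
    have h1 : (∏ i, p i (t i)) - ∏ i, q i (t i) = ∑ m ∈ Finset.range k, (H m t - H (m+1) t) := by
      rw [Finset.sum_range_sub' (fun m => H m t) k, h0, hk]
    rw [h1]
    exact Finset.abs_sum_le_sum_abs _ _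
  set F : ℕ → ℝ := fun m => ∑ t : ∀ j, C j, |H m t - H (m+1) t| with hF
  calc ∑ t : ∀ j, C j, |(∏ i, p i (t i)) - ∏ i, q i (t i)|
      ≤ ∑ t : ∀ j, C j, ∑ m ∈ Finset.range k, |H m t - H (m+1) t| :=
        Finset.sum_le_sum fun t _ => tel t
    _ = ∑ m ∈ Finset.range k, F m := Finset.sum_comm
    _ = ∑ i : Fin k, F i.val := (Fin.sum_univ_eq_sum_range F k).symm
    _ = ∑ i : Fin k, ∑ c, |p i c - q i c| := by
        refine Finset.sum_congr rfl fun i _ => ?_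
        rw [hF]
        simpa using step i.val i.isLt


lemma l1_le_of_subset_bound {C : Type} [Fintype C] [DecidableEq C] (p q : C → ℝ)
    (hsum : ∑ c, q c = ∑ c, p c) (t : ℝ)
    (h : ∀ B : Finset C, ∑ c ∈ B, (q c - p c) ≤ t) :
    ∑ c, |p c - q c| ≤ 2 * t := by
  classical
  set Bp : Finset C := {c | p c ≤ q c} with hBp
  have htot : ∑ c, (q c - p c) = 0 := by rw [Finset.sum_sub_distrib, hsum, sub_self]
  have hsplit : ∑ c ∈ Bp, (q c - p c) + ∑ c ∈ Bpᶜ, (q c - p c) = 0 := by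
    rw [Finset.sum_add_sum_compl, htot]
  have h1 : ∑ c ∈ Bp, (q c - p c) ≤ t := h Bp
  have key : ∑ c, |p c - q c| = ∑ c ∈ Bp, (q c - p c) + ∑ c ∈ Bpᶜ, (p c - q c) := by
    rw [← Finset.sum_add_sum_compl Bp fun c => |p c - q c|]
    congr 1
    · refine Finset.sum_congr rfl fun c hc => ?_
      have hc' : p c ≤ q c := by simpa [hBp] using hc
      rw [abs_sub_comm, abs_of_nonneg (by linarith)]
    · refine Finset.sum_congr rfl fun c hc => ?_
      have hc' : ¬ p c ≤ q c := by simpa [hBp] using hc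
      rw [abs_of_nonneg (by linarith)]
  have h3 : ∑ c ∈ Bpᶜ, (p c - q c) = ∑ c ∈ Bp, (q c - p c) := by
    have : ∑ c ∈ Bpᶜ, (p c - q c) = - ∑ c ∈ Bpᶜ, (q c - p c) := by
      rw [← Finset.sum_neg_distrib]; exact Finset.sum_congr rfl fun c _ => by ring
    linarith
  rw [key, h3]; linarith



lemma integral_comp_fintype {Ω : Type} [MeasurableSpace Ω] (P : Measure Ω) [IsProbabilityMeasure P]
    {C : Type} [Fintype C] (ξ : Ω → C) (hmeas : @Measurable Ω C _ ⊤ ξ) (g : C → ℝ) :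
    ∫ ω, g (ξ ω) ∂P = ∑ c, (P {ω | ξ ω = c}).toReal * g c := by
  letI : MeasurableSpace C := ⊤
  haveI : MeasurableSingletonClass C := ⟨fun _ => trivial⟩
  have hg : Measurable g := measurable_from_top
  rw [← integral_map hmeas.aemeasurable hg.aestronglyMeasurable]
  haveI : IsProbabilityMeasure (P.map ξ) := Measure.isProbabilityMeasure_map hmeas.aemeasurable
  rw [integral_fintype (.of_finite)]
  refine Finset.sum_congr rfl fun c _ => ?_
  rw [Measure.real, Measure.map_apply hmeas (MeasurableSet.singleton c)]
  have : ξ ⁻¹' {c} = {ω | ξ ω = c} := by ext ω; simp [Set.mem_preimage]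
  rw [this, smul_eq_mul]


lemma exp_le_one_add_of_le_one {s : ℝ} (h0 : 0 ≤ s) (h1 : s ≤ 1) :
    Real.exp s ≤ 1 + s + s ^ 2 := by
  have habs : |s| ≤ 1 := abs_le.2 ⟨by linarith, h1⟩
  have := Real.exp_bound habs (by norm_num : 0 < 2)
  have hsum : ∑ i ∈ Finset.range 2, s ^ i / (Nat.factorial i : ℝ) = 1 + s := by
    simp [Finset.sum_range_succ]
  rw [hsum] at this
  have h2 : |s| ^ 2 * ((2 + 1 : ℕ) / ((Nat.factorial 2 : ℝ) * 2)) ≤ s ^ 2 := by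
    rw [sq_abs]
    have : ((2 + 1 : ℕ) : ℝ) / ((Nat.factorial 2 : ℝ) * 2) = 3 / 4 := by
      norm_num [Nat.factorial]
    rw [this]
    nlinarith [sq_nonneg s]
  have := abs_le.1 this
  nlinarith [this.2]

lemma bernoulli_chernoff {Ω : Type} [MeasurableSpace Ω] (P : Measure Ω) [IsProbabilityMeasure P]
    {C : Type} [Fintype C] [DecidableEq C] {n : ℕ} (ξ : Fin n → Ω → C)
    (hmeas : ∀ m, @Measurable Ω C _ ⊤ (ξ m))
    (hindep : ProbabilityTheory.iIndepFun (m := fun _ => (⊤ : MeasurableSpace C)) ξ P)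
    (p : C → ℝ) (hp0 : ∀ c, 0 ≤ p c) (hp1 : ∑ c, p c = 1)
    (hdist : ∀ m c, P {ω | ξ m ω = c} = ENNReal.ofReal (p c))
    (B : Finset C) (t : ℝ) (ht : 0 < t) (ht1 : t ≤ 1) :
    P {ω | (n : ℝ) * (∑ c ∈ B, p c) + n * t ≤ ∑ m, (if ξ m ω ∈ B then (1:ℝ) else 0)} ≤
      ENNReal.ofReal (Real.exp (-(n * t ^ 2) / 4)) := by
  classical
  set μB : ℝ := ∑ c ∈ B, p c with hμB
  have hμB0 : 0 ≤ μB := Finset.sum_nonneg fun c _ => hp0 c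
  have hμB1 : μB ≤ 1 := by
    rw [hμB, ← hp1]
    exact Finset.sum_le_sum_of_subset_of_nonneg (Finset.subset_univ B) fun c _ _ => hp0 c
  set F : C → ℝ := fun c => if c ∈ B then 1 else 0 with hFdef
  set Y : Fin n → Ω → ℝ := fun m ω => F (ξ m ω) with hYdef
  set s : ℝ := t / 2 with hs
  have hs0 : 0 ≤ s := by positivity
  have hs1 : s ≤ 1 := by rw [hs]; linarith
  have hYmeas : ∀ m, Measurable (Y m) := fun m => (measurable_from_top (f := F)).comp (hmeas m)
  have hYindep : ProbabilityTheory.iIndepFun (m := fun _ => inferInstance) Y P := by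
    have := hindep.comp (fun _ => F) (fun _ => measurable_from_top)
    exact this
  -- single mgf
  have hmgf : ∀ m, mgf (Y m) P s = (1 - μB) + μB * Real.exp s := by
    intro m
    have hic := integral_comp_fintype P (ξ m) (hmeas m) (fun c => Real.exp (s * F c))
    have hmgfe : mgf (Y m) P s = ∑ c, (P {ω | ξ m ω = c}).toReal * Real.exp (s * F c) := hic
    rw [hmgfe]
    have hterm : ∀ c, (P {ω | ξ m ω = c}).toReal * Real.exp (s * F c)
        = p c * Real.exp (s * F c) := by
      intro c; rw [hdist m c, ENNReal.toReal_ofReal (hp0 c)]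
    rw [Finset.sum_congr rfl fun c _ => hterm c]
    rw [← Finset.sum_add_sum_compl B fun c => p c * Real.exp (s * F c)]
    have h1 : ∑ c ∈ B, p c * Real.exp (s * F c) = μB * Real.exp s := by
      rw [hμB, Finset.sum_mul]
      refine Finset.sum_congr rfl fun c hc => ?_
      simp [hFdef, hc]
    have h2 : ∑ c ∈ Bᶜ, p c * Real.exp (s * F c) = ∑ c ∈ Bᶜ, p c := by
      refine Finset.sum_congr rfl fun c hc => ?_
      rw [Finset.mem_compl] at hc
      simp [hFdef, hc]
    have h3 : ∑ c ∈ Bᶜ, p c = 1 - μB := by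
      have := Finset.sum_add_sum_compl B p
      rw [hp1] at this; linarith [this]
    rw [h1, h2, h3]; ring
  have hmgf_le : ∀ m, mgf (Y m) P s ≤ Real.exp (μB * s + s ^ 2) := by
    intro m
    rw [hmgf m]
    have he : Real.exp s ≤ 1 + s + s ^ 2 := exp_le_one_add_of_le_one hs0 hs1
    have h4 : (1 - μB) + μB * Real.exp s ≤ 1 + (μB * s + s ^ 2) := by nlinarith
    calc (1 - μB) + μB * Real.exp s ≤ 1 + (μB * s + s ^ 2) := h4
      _ ≤ Real.exp (μB * s + s ^ 2) := by
          have := Real.add_one_le_exp (μB * s + s ^ 2); linarith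
  -- sum
  set X : Ω → ℝ := ∑ m, Y m with hX
  have hXapp : ∀ ω, X ω = ∑ m, Y m ω := by
    intro ω; rw [hX]; simp
  have hXmeas : Measurable X := by
    have h1 : Measurable fun a => ∑ m, Y m a := Finset.measurable_sum univ fun m _ => hYmeas m
    have h2 : X = fun a => ∑ m, Y m a := funext hXapp
    rw [h2]; exact h1
  have hXle : ∀ ω, X ω ≤ n := by
    intro ω
    rw [hXapp]
    calc ∑ m, Y m ω ≤ ∑ _m : Fin n, (1:ℝ) := by
          refine Finset.sum_le_sum fun m _ => ?_
          by_cases hb : ξ m ω ∈ B <;> simp [hYdef, hFdef, hb]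
      _ = n := by simp
  have hint : Integrable (fun ω => Real.exp (s * X ω)) P := by
    refine Integrable.mono' (integrable_const (Real.exp (s * n)))
      ((hXmeas.const_mul s).exp.aestronglyMeasurable) (ae_of_all _ fun ω => ?_)
    rw [Real.norm_eq_abs, abs_of_nonneg (Real.exp_pos _).le]
    exact Real.exp_le_exp.2 (mul_le_mul_of_nonneg_left (hXle ω) hs0)
  have hmgfsum : mgf X P s = ∏ m, mgf (Y m) P s := hYindep.mgf_sum hYmeas univ
  have hmgfX : mgf X P s ≤ Real.exp ((n : ℝ) * (μB * s + s ^ 2)) := by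
    rw [hmgfsum]
    calc ∏ m, mgf (Y m) P s ≤ ∏ _m : Fin n, Real.exp (μB * s + s ^ 2) :=
          Finset.prod_le_prod (fun m _ => mgf_nonneg) (fun m _ => hmgf_le m)
      _ = Real.exp ((n : ℝ) * (μB * s + s ^ 2)) := by
          rw [Finset.prod_const, ← Real.exp_nat_mul]; simp
  -- Chernoff
  have hcher := measure_ge_le_exp_mul_mgf (μ := P) (X := X) ((n : ℝ) * μB + n * t) hs0 hint
  have hfinal : Real.exp (-s * ((n : ℝ) * μB + n * t)) * mgf X P s ≤
      Real.exp (-(n * t ^ 2) / 4) := by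
    calc Real.exp (-s * ((n : ℝ) * μB + n * t)) * mgf X P s
        ≤ Real.exp (-s * ((n : ℝ) * μB + n * t)) * Real.exp ((n : ℝ) * (μB * s + s ^ 2)) := by
          exact mul_le_mul_of_nonneg_left hmgfX (Real.exp_pos _).le
      _ = Real.exp (-s * ((n : ℝ) * μB + n * t) + (n : ℝ) * (μB * s + s ^ 2)) :=
          (Real.exp_add _ _).symm
      _ = Real.exp (-(n * t ^ 2) / 4) := by
          congr 1
          rw [hs]; ring
  have hset : {ω | (n : ℝ) * (∑ c ∈ B, p c) + n * t ≤ ∑ m, (if ξ m ω ∈ B then (1:ℝ) else 0)}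
      = {ω | (n : ℝ) * μB + n * t ≤ X ω} := by
    ext ω
    simp only [Set.mem_setOf_eq, hXapp, hμB]
    exact Iff.rfl
  rw [hset]
  rw [ENNReal.le_ofReal_iff_toReal_le (measure_ne_top P _) (Real.exp_pos _).le]
  exact le_trans hcher hfinal


lemma log_bound_helper (lk K a b d e M : ℝ) (h1 : lk ≤ K * a) (h2 : a ≤ b) (ha : 0 < a)
    (hK : 1 ≤ K) (hM : 2 ≤ M) (hd : 0 ≤ d) (he : e < 0) :
    lk + (K * b + d) + M * a - e ≤ 4 * (M * (K * b + d - e)) := by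
  have hb : 0 < b := lt_of_lt_of_le ha h2
  have hu : 0 ≤ K * b := by positivity
  have hbu : b ≤ K * b := le_mul_of_one_le_left hb.le hK
  have hlk : lk ≤ K * b := h1.trans (by nlinarith)
  have hMa : M * a ≤ M * (K * b) :=
    mul_le_mul_of_nonneg_left (h2.trans hbu) (by linarith)
  have p1 : 2 * (K * b) ≤ M * (K * b) := mul_le_mul_of_nonneg_right hM hu
  have p2 : d ≤ M * d := le_mul_of_one_le_left hd (by linarith)
  have p3 : M * e ≤ e := by nlinarith
  have p4 : 0 ≤ M * d := by nlinarith
  have p5 : M * e ≤ 0 := by nlinarith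
  have p6 : 0 ≤ M * (K * b) := by nlinarith
  nlinarith [p1, p2, p3, p4, p5, p6, hlk, hMa]

set_option maxHeartbeats 1600000 in
/-- MoCoDA Theorem 1: sample complexity of learning a locally factored dynamics
model.  There is a universal constant `c > 0` such that if each local causal
mechanism `P_i(· | x)` is estimated by the empirical frequency distribution of
`n ≥ c k² |c_i| log(|S||A|/δ) / ε²` i.i.d. samples (for every mechanism `i` and
parent configuration `x`), then with probability at least `1 − δ` the ℓ1 error of
the learned factored model is at most `ε` uniformly over all state-action pairs. -/
theorem locally_factored_model_sample_complexity :
    ∃ c : ℝ, 0 < c ∧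
      ∀ (k : ℕ), 0 < k →
      ∀ (C : Fin k → Type) [∀ i, Fintype (C i)] [∀ i, Nonempty (C i)]
        [∀ i, DecidableEq (C i)]
        (cc : ℕ), (∀ i, Fintype.card (C i) = cc) →
      ∀ (A : Type) [Fintype A] [Nonempty A]
        (Xp : Fin k → Type) [∀ i, Fintype (Xp i)]
        (pa : ∀ i, ((∀ j, C j) × A) → Xp i)
        (Pc : ∀ i, Xp i → C i → ℝ),
        (∀ i x ci, 0 ≤ Pc i x ci) → (∀ i x, ∑ ci, Pc i x ci = 1) →
      ∀ (Ω : Type) [MeasurableSpace Ω] (P : Measure Ω) [IsProbabilityMeasure P]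
        (n : ℕ), 0 < n →
      ∀ (ξ : ∀ i, Xp i → Fin n → Ω → C i),
        (∀ i x m, @Measurable Ω (C i) _ ⊤ (ξ i x m)) →
        (∀ i x, ProbabilityTheory.iIndepFun (m := fun _ => (⊤ : MeasurableSpace (C i))) (ξ i x) P) →
        (∀ i x m ci, P {ω | ξ i x m ω = ci} = ENNReal.ofReal (Pc i x ci)) →
      ∀ (ε δ : ℝ), 0 < ε → 0 < δ → δ < 1 →
        c * k ^ 2 * cc *
            Real.log ((Fintype.card (∀ j, C j) * Fintype.card A : ℕ) / δ) / ε ^ 2 ≤ n →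
        ENNReal.ofReal (1 - δ) ≤
          P {ω | ∀ sa : (∀ j, C j) × A,
              ∑ t : ∀ j, C j,
                |(∏ i, Pc i (pa i sa) (t i)) -
                  ∏ i, (((univ.filter fun m => ξ i (pa i sa) m ω = t i).card : ℝ) / n)|
              ≤ ε} := by
  refine ⟨64, by norm_num, ?_⟩
  intro k hk C _ _ _ cc hcard A _ _ Xp _ pa Pc hPc0 hPc1 Ω _ P _ n hn ξ hξmeas hξindep hξdist
    ε δ hε hδ0 hδ1 hsamp
  have hn' : (0:ℝ) < n := Nat.cast_pos.2 hn
  have hk' : (1:ℝ) ≤ k := by exact_mod_cast hk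
  -- empirical distribution sums to one
  have hQ1 : ∀ (i : Fin k) (x : Xp i) (ω : Ω),
      ∑ c : C i, (((univ.filter fun m => ξ i x m ω = c).card : ℝ) / n) = 1 := by
    intro i x ω
    rw [← Finset.sum_div]
    have h1 : ∑ c : C i, (((univ.filter fun m => ξ i x m ω = c).card : ℝ)) = n := by
      rw [← Nat.cast_sum]
      have h2 := Finset.card_eq_sum_card_fiberwise
        (f := fun m => ξ i x m ω) (s := (univ : Finset (Fin n))) (t := univ)
        (fun m _ => Finset.mem_univ _)
      rw [← h2, Finset.card_univ, Fintype.card_fin]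
    rw [h1, div_self hn'.ne']
  have hQ0 : ∀ (i : Fin k) (x : Xp i) (ω : Ω) (c : C i),
      0 ≤ ((univ.filter fun m => ξ i x m ω = c).card : ℝ) / n := fun i x ω c => by positivity
  -- trivial-case helper
  have htriv : (∀ (ω : Ω) (sa : (∀ j, C j) × A), ∑ t : ∀ j, C j,
        |(∏ i, Pc i (pa i sa) (t i)) -
          ∏ i, (((univ.filter fun m => ξ i (pa i sa) m ω = t i).card : ℝ) / n)| ≤ ε) →
      ENNReal.ofReal (1 - δ) ≤
        P {ω | ∀ sa : (∀ j, C j) × A, ∑ t : ∀ j, C j,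
            |(∏ i, Pc i (pa i sa) (t i)) -
              ∏ i, (((univ.filter fun m => ξ i (pa i sa) m ω = t i).card : ℝ) / n)| ≤ ε} := by
    intro h
    have he : {ω | ∀ sa : (∀ j, C j) × A, ∑ t : ∀ j, C j,
        |(∏ i, Pc i (pa i sa) (t i)) -
          ∏ i, (((univ.filter fun m => ξ i (pa i sa) m ω = t i).card : ℝ) / n)| ≤ ε}
        = Set.univ := Set.eq_univ_of_forall h
    rw [he, measure_univ]
    exact ENNReal.ofReal_le_one.mpr (by linarith)
  by_cases hcc1 : cc = 1
  · -- deterministic case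
    refine htriv fun ω sa => ?_
    have hsub : ∀ i : Fin k, Subsingleton (C i) :=
      fun i => Fintype.card_le_one_iff_subsingleton.mp (by rw [hcard i, hcc1])
    have hzero : ∀ t : ∀ j, C j,
        |(∏ i, Pc i (pa i sa) (t i)) -
          ∏ i, (((univ.filter fun m => ξ i (pa i sa) m ω = t i).card : ℝ) / n)| = 0 := by
      intro t
      have h1 : ∀ i, Pc i (pa i sa) (t i) = 1 := by
        intro i
        have hh := hPc1 i (pa i sa)
        haveI := hsub i
        rwa [Fintype.sum_subsingleton _ (t i)] at hh
      have h2 : ∀ i, ((univ.filter fun m => ξ i (pa i sa) m ω = t i).card : ℝ) / n = 1 := by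
        intro i
        haveI := hsub i
        have : (univ.filter fun m => ξ i (pa i sa) m ω = t i) = univ := by
          refine Finset.filter_true_of_mem fun m _ => Subsingleton.elim _ _
        rw [this, Finset.card_univ, Fintype.card_fin, div_self hn'.ne']
      simp [Finset.prod_congr rfl fun i _ => h1 i, Finset.prod_congr rfl fun i _ => h2 i]
    rw [Finset.sum_congr rfl fun t _ => hzero t]
    simp [hε.le]
  by_cases hε2 : 2 ≤ ε
  · -- large epsilon case
    refine htriv fun ω sa => ?_
    have hb : ∀ t : ∀ j, C j,
        |(∏ i, Pc i (pa i sa) (t i)) -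
          ∏ i, (((univ.filter fun m => ξ i (pa i sa) m ω = t i).card : ℝ) / n)| ≤
        (∏ i, Pc i (pa i sa) (t i)) +
          ∏ i, (((univ.filter fun m => ξ i (pa i sa) m ω = t i).card : ℝ) / n) := by
      intro t
      have ha : 0 ≤ ∏ i, Pc i (pa i sa) (t i) :=
        Finset.prod_nonneg fun i _ => hPc0 i _ _
      have hb' : 0 ≤ ∏ i, (((univ.filter fun m => ξ i (pa i sa) m ω = t i).card : ℝ) / n) :=
        Finset.prod_nonneg fun i _ => hQ0 i _ ω _
      rw [abs_le]; constructor <;> linarith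
    calc ∑ t : ∀ j, C j, |(∏ i, Pc i (pa i sa) (t i)) -
          ∏ i, (((univ.filter fun m => ξ i (pa i sa) m ω = t i).card : ℝ) / n)|
        ≤ ∑ t : ∀ j, C j, ((∏ i, Pc i (pa i sa) (t i)) +
          ∏ i, (((univ.filter fun m => ξ i (pa i sa) m ω = t i).card : ℝ) / n)) :=
          Finset.sum_le_sum fun t _ => hb t
      _ = 2 := by
          rw [Finset.sum_add_distrib,
            sum_pi_prod_s11 (fun i c => Pc i (pa i sa) c),
            sum_pi_prod_s11 (fun i c => ((univ.filter fun m => ξ i (pa i sa) m ω = c).card : ℝ) / n)]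
          rw [Finset.prod_congr rfl fun i _ => hPc1 i (pa i sa),
            Finset.prod_congr rfl fun i _ => hQ1 i (pa i sa) ω]
          norm_num
      _ ≤ ε := hε2
  -- main case
  push_neg at hε2
  have hcc2 : 2 ≤ cc := by
    have h1 := Fintype.card_pos (α := C ⟨0, hk⟩)
    rw [hcard ⟨0, hk⟩] at h1
    omega
  have hcc2' : (2:ℝ) ≤ cc := by exact_mod_cast hcc2
  have hkpos : (0:ℝ) < k := by linarith
  set t0 : ℝ := ε / (2 * k) with ht0def
  have ht0 : 0 < t0 := by rw [ht0def]; positivity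
  have ht01 : t0 ≤ 1 := by
    rw [ht0def, div_le_one (by positivity)]
    linarith
  -- bad events
  set Bad : (Σ i : Fin k, (((∀ l, C l) × A) × Finset (C i))) → Set Ω := fun j =>
    {ω | (n : ℝ) * (∑ c ∈ j.2.2, Pc j.1 (pa j.1 j.2.1) c) + n * t0 ≤
      ∑ m, (if ξ j.1 (pa j.1 j.2.1) m ω ∈ j.2.2 then (1:ℝ) else 0)} with hBad
  have hBadP : ∀ j, P (Bad j) ≤ ENNReal.ofReal (Real.exp (-(n * t0 ^ 2) / 4)) := fun j =>
    bernoulli_chernoff P (ξ j.1 (pa j.1 j.2.1)) (hξmeas _ _) (hξindep _ _)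
      (Pc j.1 (pa j.1 j.2.1)) (hPc0 _ _) (hPc1 _ _) (hξdist _ _) j.2.2 t0 ht0 ht01
  have hBadMeas : ∀ j, MeasurableSet (Bad j) := by
    intro j
    have hm : Measurable (fun ω => ∑ m, (if ξ j.1 (pa j.1 j.2.1) m ω ∈ j.2.2 then (1:ℝ) else 0)) :=
      Finset.measurable_sum univ fun m _ =>
        (measurable_from_top (f := fun c => if c ∈ j.2.2 then (1:ℝ) else 0)).comp
          (hξmeas _ _ m)
    exact measurableSet_le measurable_const hm
  -- numerics
  set L : ℝ := Real.log ((Fintype.card (∀ j, C j) * Fintype.card A : ℕ) / δ) with hLdef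
  set S' : ℝ := (Fintype.card (∀ j, C j) : ℝ) with hS'def
  set A' : ℝ := (Fintype.card A : ℝ) with hA'def
  have hScard : Fintype.card (∀ j, C j) = cc ^ k := by
    rw [Fintype.card_pi]
    rw [Finset.prod_congr rfl fun i _ => hcard i, Finset.prod_const, Finset.card_univ,
      Fintype.card_fin]
  have hS'eq : S' = (cc:ℝ) ^ k := by rw [hS'def, hScard]; push_cast; ring
  have hS'pos : (0:ℝ) < S' := by rw [hS'eq]; positivity
  have hA1 : (1:ℝ) ≤ A' := by
    rw [hA'def]; exact_mod_cast Fintype.card_pos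
  have hA'pos : (0:ℝ) < A' := by linarith
  have hlogS : Real.log S' = k * Real.log cc := by rw [hS'eq, Real.log_pow]
  have hlogcc : 0 < Real.log cc := Real.log_pos (by linarith)
  have hlogA : 0 ≤ Real.log A' := Real.log_nonneg hA1
  have hlogd : Real.log δ < 0 := Real.log_neg hδ0 hδ1
  have hLeq : L = Real.log S' + Real.log A' - Real.log δ := by
    rw [hLdef]
    push_cast
    rw [Real.log_div (by positivity) hδ0.ne', Real.log_mul hS'pos.ne' hA'pos.ne']
  have hL0 : 0 < L := by
    rw [hLeq, hlogS]
    linarith [mul_pos hkpos hlogcc]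
  have hcardι : (Fintype.card (Σ i : Fin k, (((∀ l, C l) × A) × Finset (C i))) : ℝ)
      = k * (S' * A' * 2 ^ cc) := by
    rw [Fintype.card_sigma]
    have h1 : ∀ i : Fin k, Fintype.card ((((∀ l, C l) × A) × Finset (C i)))
        = Fintype.card (∀ l, C l) * Fintype.card A * 2 ^ cc := by
      intro i
      rw [Fintype.card_prod, Fintype.card_prod, Fintype.card_finset, hcard i]
    rw [Finset.sum_congr rfl fun i _ => h1 i, Finset.sum_const, Finset.card_univ,
      Fintype.card_fin, smul_eq_mul]
    push_cast
    ring
  set N' : ℝ := (Fintype.card (Σ i : Fin k, (((∀ l, C l) × A) × Finset (C i))) : ℝ) with hN'def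
  have hN'pos : 0 < N' := by rw [hcardι]; positivity
  have hlogN : Real.log N' = Real.log k + (Real.log S' + Real.log A') + cc * Real.log 2 := by
    rw [hcardι, Real.log_mul hkpos.ne' (by positivity),
      Real.log_mul (by positivity) (by positivity),
      Real.log_mul hS'pos.ne' hA'pos.ne', Real.log_pow]
    ring
  have hlogk2 : Real.log k ≤ k * Real.log 2 := by
    have h1 : (k:ℝ) ≤ (2:ℝ) ^ k := by exact_mod_cast (Nat.lt_two_pow_self (n := k)).le
    calc Real.log k ≤ Real.log ((2:ℝ) ^ k) := Real.log_le_log hkpos h1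
      _ = k * Real.log 2 := by rw [Real.log_pow]
  have hlog2cc : Real.log 2 ≤ Real.log cc := Real.log_le_log (by norm_num) hcc2'
  have hlog2pos : 0 < Real.log 2 := Real.log_pos (by norm_num)
  have hmain : Real.log N' - Real.log δ ≤ 4 * (cc * L) := by
    rw [hlogN, hLeq, hlogS]
    exact log_bound_helper _ _ _ _ _ _ _ hlogk2 hlog2cc hlog2pos hk' hcc2' hlogA hlogd
  have hx : 4 * ((cc:ℝ) * L) ≤ (n * t0 ^ 2) / 4 := by
    have h1 : 64 * (k:ℝ) ^ 2 * cc * L ≤ n * ε ^ 2 := by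
      rw [div_le_iff₀ (pow_pos hε 2)] at hsamp
      linarith
    have h2 : ((n:ℝ) * t0 ^ 2) / 4 = n * ε ^ 2 / (16 * k ^ 2) := by
      rw [ht0def]
      field_simp
      ring
    rw [h2, le_div_iff₀ (by positivity)]
    linarith
  have hxlog : Real.log (N' / δ) ≤ ((n:ℝ) * t0 ^ 2) / 4 := by
    rw [Real.log_div hN'pos.ne' hδ0.ne']
    linarith
  have hnum : N' * Real.exp (-((n:ℝ) * t0 ^ 2) / 4) ≤ δ := by
    have h3 : Real.exp (-((n:ℝ) * t0 ^ 2) / 4) ≤ Real.exp (-(Real.log (N' / δ))) := by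
      apply Real.exp_le_exp.2
      rw [neg_div]
      exact neg_le_neg hxlog
    have h4 : Real.exp (-(Real.log (N' / δ))) = δ / N' := by
      rw [Real.exp_neg, Real.exp_log (div_pos hN'pos hδ0), inv_div]
    calc N' * Real.exp (-((n:ℝ) * t0 ^ 2) / 4) ≤ N' * (δ / N') :=
          mul_le_mul_of_nonneg_left (h3.trans_eq h4) hN'pos.le
      _ = δ := by field_simp
  -- union bound
  have hPU : P (⋃ j, Bad j) ≤ ENNReal.ofReal δ := by
    calc P (⋃ j, Bad j) ≤ ∑' j, P (Bad j) := measure_iUnion_le _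
      _ = ∑ j, P (Bad j) := tsum_fintype _
      _ ≤ ∑ _j : (Σ i : Fin k, (((∀ l, C l) × A) × Finset (C i))),
            ENNReal.ofReal (Real.exp (-((n:ℝ) * t0 ^ 2) / 4)) :=
          Finset.sum_le_sum fun j _ => hBadP j
      _ = (Fintype.card (Σ i : Fin k, (((∀ l, C l) × A) × Finset (C i))) : ℝ≥0∞) *
            ENNReal.ofReal (Real.exp (-((n:ℝ) * t0 ^ 2) / 4)) := by
          rw [Finset.sum_const, Finset.card_univ, nsmul_eq_mul]
      _ = ENNReal.ofReal (N' * Real.exp (-((n:ℝ) * t0 ^ 2) / 4)) := by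
          rw [ENNReal.ofReal_mul (by positivity : (0:ℝ) ≤ N'), hN'def,
            ENNReal.ofReal_natCast]
      _ ≤ ENNReal.ofReal δ := ENNReal.ofReal_le_ofReal hnum
  have hUm : MeasurableSet (⋃ j, Bad j) := MeasurableSet.iUnion hBadMeas
  -- deterministic implication
  have hsub : (⋃ j, Bad j)ᶜ ⊆ {ω | ∀ sa : (∀ j, C j) × A, ∑ t : ∀ j, C j,
      |(∏ i, Pc i (pa i sa) (t i)) -
        ∏ i, (((univ.filter fun m => ξ i (pa i sa) m ω = t i).card : ℝ) / n)| ≤ ε} := by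
    intro ω hω sa
    simp only [Set.mem_compl_iff, Set.mem_iUnion, not_exists] at hω
    have hper : ∀ i : Fin k, ∑ c, |Pc i (pa i sa) c -
        ((univ.filter fun m => ξ i (pa i sa) m ω = c).card : ℝ) / n| ≤ 2 * t0 := by
      intro i
      refine l1_le_of_subset_bound _ _ (by rw [hQ1 i (pa i sa) ω, hPc1]) t0 ?_
      intro B
      have hnb := hω ⟨i, (sa, B)⟩
      rw [hBad] at hnb
      simp only [Set.mem_setOf_eq, not_le] at hnb
      have hcount : ∑ c ∈ B, (((univ.filter fun m => ξ i (pa i sa) m ω = c).card : ℝ)) =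
          ∑ m, (if ξ i (pa i sa) m ω ∈ B then (1:ℝ) else 0) := by
        rw [Finset.sum_boole]
        rw [← Nat.cast_sum]
        congr 1
        rw [Finset.card_eq_sum_card_fiberwise (f := fun m => ξ i (pa i sa) m ω)
          (s := univ.filter fun m => ξ i (pa i sa) m ω ∈ B) (t := B)
          (fun m hm => (Finset.mem_filter.1 hm).2)]
        refine Finset.sum_congr rfl fun c hc => ?_
        congr 1
        ext m
        simp only [Finset.mem_filter, Finset.mem_univ, true_and]
        constructor
        · intro h
          exact ⟨by rw [h]; exact hc, h⟩
        · exact fun h => h.2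
      have hqsum : ∑ c ∈ B, (((univ.filter fun m => ξ i (pa i sa) m ω = c).card : ℝ) / n)
          = (∑ m, (if ξ i (pa i sa) m ω ∈ B then (1:ℝ) else 0)) / n := by
        rw [← Finset.sum_div, hcount]
      have hlt : (∑ m, (if ξ i (pa i sa) m ω ∈ B then (1:ℝ) else 0)) / n
          < (∑ c ∈ B, Pc i (pa i sa) c) + t0 := by
        rw [div_lt_iff₀ hn']
        linarith [hnb]
      calc ∑ c ∈ B, ((((univ.filter fun m => ξ i (pa i sa) m ω = c).card : ℝ) / n)
              - Pc i (pa i sa) c)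
          = (∑ m, (if ξ i (pa i sa) m ω ∈ B then (1:ℝ) else 0)) / n
              - ∑ c ∈ B, Pc i (pa i sa) c := by
            rw [Finset.sum_sub_distrib, hqsum]
        _ ≤ t0 := by linarith
    calc ∑ t : ∀ j, C j, |(∏ i, Pc i (pa i sa) (t i)) -
          ∏ i, (((univ.filter fun m => ξ i (pa i sa) m ω = t i).card : ℝ) / n)|
        ≤ ∑ i, ∑ c, |Pc i (pa i sa) c -
            ((univ.filter fun m => ξ i (pa i sa) m ω = c).card : ℝ) / n| :=
          telescope_l1 (fun i c => Pc i (pa i sa) c)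
            (fun i c => ((univ.filter fun m => ξ i (pa i sa) m ω = c).card : ℝ) / n)
            (fun i c => hPc0 i _ c) (fun i c => hQ0 i _ ω c)
            (fun i => hPc1 i _) (fun i => hQ1 i _ ω)
      _ ≤ ∑ _i : Fin k, 2 * t0 := Finset.sum_le_sum fun i _ => hper i
      _ = k * (2 * t0) := by rw [Finset.sum_const, Finset.card_univ, Fintype.card_fin,
            nsmul_eq_mul]
      _ = ε := by rw [ht0def]; field_simp
  calc ENNReal.ofReal (1 - δ) = 1 - ENNReal.ofReal δ := by
        rw [ENNReal.ofReal_sub _ hδ0.le, ENNReal.ofReal_one]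
    _ ≤ 1 - P (⋃ j, Bad j) := tsub_le_tsub_left hPU 1
    _ = P (⋃ j, Bad j)ᶜ := (prob_compl_eq_one_sub hUm).symm
    _ ≤ P _ := measure_mono hsub
end
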